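/- arXiv:1811.10542 — 5 statements merged into one kernel-verified Lean document; each statement's English description precedes it below -/
import Mathlib

section
/- Let β be a real d×d matrix. Then every complex eigenvalue of β has strictly negative real part if and only if there exists a symmetric positive definite d×d real matrix v such that βv + vβ^⊤ is negative definite (i.e. −(βv + vβ^⊤) is positive definite). -/
open Matrix

noncomputable section

/-- The set of complex eigenvalues of a real square matrix `β`, i.e. the eigenvalues of `β`
regarded as a matrix over `ℂ`. -/
def matCSpectrum {d : ℕ} (β : Matrix (Fin d) (Fin d) ℝ) : Set ℂ :=
  {z : ℂ | ∃ x : Fin d → ℂ, x ≠ 0 ∧ (β.map (Complex.ofReal)).mulVec x = z • x}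

section LyapunovAux

open NormedSpace Nat
open scoped ENNReal NNReal Topology

attribute [local instance] Matrix.linftyOpNormedAddCommGroup Matrix.linftyOpNormedRing
  Matrix.linftyOpNormedAlgebra
attribute [-instance] instTopologicalSpaceMatrix Matrix.instUniformSpace

variable {d : ℕ}



variable {d : ℕ}

lemma eig_iff_det (A : Matrix (Fin d) (Fin d) ℂ) (z : ℂ) :
    (∃ x : Fin d → ℂ, x ≠ 0 ∧ A.mulVec x = z • x) ↔ (A - z • 1).det = 0 := by
  rw [← Matrix.exists_mulVec_eq_zero_iff]
  constructor
  · rintro ⟨x, hx, h⟩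
    exact ⟨x, hx, by simp [Matrix.sub_mulVec, Matrix.smul_mulVec, h]⟩
  · rintro ⟨x, hx, h⟩
    refine ⟨x, hx, ?_⟩
    have := h
    rw [Matrix.sub_mulVec, Matrix.smul_mulVec, Matrix.one_mulVec, sub_eq_zero] at this
    simpa using this

lemma mem_matCSpectrum_iff (β : Matrix (Fin d) (Fin d) ℝ) (z : ℂ) :
    z ∈ matCSpectrum β ↔ (β.map Complex.ofReal - z • 1).det = 0 :=
  eig_iff_det _ z

lemma matCSpectrum_transpose (β : Matrix (Fin d) (Fin d) ℝ) :
    matCSpectrum βᵀ = matCSpectrum β := by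
  ext z
  rw [mem_matCSpectrum_iff, mem_matCSpectrum_iff, ← Matrix.det_transpose]
  rw [Matrix.transpose_sub, Matrix.transpose_smul, Matrix.transpose_one, Matrix.transpose_map]
  rfl

variable {d : ℕ}

lemma map_mulVec_star (w : Matrix (Fin d) (Fin d) ℝ) (y : Fin d → ℂ) :
    (w.map Complex.ofReal) *ᵥ (star y) = star ((w.map Complex.ofReal) *ᵥ y) := by
  ext i
  simp only [Matrix.mulVec, dotProduct, Pi.star_apply, Matrix.map_apply]
  rw [star_sum]
  congr 1
  ext j
  simp [mul_comm]

lemma posdef_complexify {w : Matrix (Fin d) (Fin d) ℝ} (hw : w.PosDef) {y : Fin d → ℂ}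
    (hy : y ≠ 0) : 0 < (star y ⬝ᵥ ((w.map Complex.ofReal) *ᵥ y)).re := by
  set a : Fin d → ℝ := fun i => (y i).re with ha
  set b : Fin d → ℝ := fun i => (y i).im with hb
  have key : (star y ⬝ᵥ ((w.map Complex.ofReal) *ᵥ y)).re
      = a ⬝ᵥ (w *ᵥ a) + b ⬝ᵥ (w *ᵥ b) := by
    simp only [dotProduct, Matrix.mulVec, Pi.star_apply, Matrix.map_apply,
      Complex.re_sum, Finset.mul_sum, Finset.sum_mul]
    rw [← Finset.sum_add_distrib]
    congr 1
    ext i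
    rw [← Finset.sum_add_distrib]
    congr 1
    ext j
    simp only [Complex.mul_re, Complex.mul_im, Complex.ofReal_re, Complex.ofReal_im,
      RCLike.star_def, Complex.conj_re, Complex.conj_im, ha, hb]
    ring
  rw [key]
  have hab : a ≠ 0 ∨ b ≠ 0 := by
    by_contra h
    push_neg at h
    apply hy
    ext i
    have h1 : a i = 0 := by rw [h.1]; rfl
    have h2 : b i = 0 := by rw [h.2]; rfl
    exact Complex.ext (by simpa using h1) (by simpa using h2)
  rcases hab with h | h
  · have h1 := hw.dotProduct_mulVec_pos h
    have h2 := hw.posSemidef.dotProduct_mulVec_nonneg b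
    simp only [star_trivial] at h1 h2
    linarith
  · have h1 := hw.dotProduct_mulVec_pos h
    have h2 := hw.posSemidef.dotProduct_mulVec_nonneg a
    simp only [star_trivial] at h1 h2
    linarith
lemma lyapunov_backward {β v : Matrix (Fin d) (Fin d) ℝ} (hv : v.PosDef)
    (hS : (-(β * v + v * βᵀ)).PosDef) : ∀ z ∈ matCSpectrum β, z.re < 0 := by
  intro z hz
  rw [← matCSpectrum_transpose] at hz
  obtain ⟨y, hy, hMy⟩ := hz
  set M := β.map Complex.ofReal with hM
  set V := v.map Complex.ofReal with hV
  have hMt : (βᵀ).map Complex.ofReal = Mᵀ := Matrix.transpose_map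
  rw [hMt] at hMy
  set c := star y ⬝ᵥ (V *ᵥ y) with hc
  have hmap : (β * v + v * βᵀ).map Complex.ofReal = M * V + V * Mᵀ := by
    ext i j
    simp [hM, hV, Matrix.map_apply, Matrix.add_apply, Matrix.mul_apply, Complex.ofReal_sum]
  have e1 : star y ⬝ᵥ ((M * V) *ᵥ y) = (starRingEnd ℂ) z * c := by
    rw [← Matrix.mulVec_mulVec, Matrix.dotProduct_mulVec, ← Matrix.mulVec_transpose]
    have : Mᵀ *ᵥ star y = (starRingEnd ℂ) z • star y := by
      have h2 : (βᵀ).map Complex.ofReal *ᵥ star y = star ((βᵀ).map Complex.ofReal *ᵥ y) :=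
        map_mulVec_star βᵀ y
      rw [hMt] at h2
      rw [h2, hMy, star_smul]
      rfl
    rw [this, smul_dotProduct, smul_eq_mul]
  have e2 : star y ⬝ᵥ ((V * Mᵀ) *ᵥ y) = z * c := by
    rw [← Matrix.mulVec_mulVec, hMy, Matrix.mulVec_smul, dotProduct_smul]
    rfl
  have hpos := posdef_complexify hS hy
  have hneg : (star y ⬝ᵥ (((β * v + v * βᵀ).map Complex.ofReal) *ᵥ y)).re < 0 := by
    have hmapneg : ((-(β * v + v * βᵀ)).map Complex.ofReal)
        = -((β * v + v * βᵀ).map Complex.ofReal) := by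
      ext i j; simp [Matrix.map_apply]
    rw [hmapneg, Matrix.neg_mulVec, dotProduct_neg] at hpos
    simpa using hpos
  rw [hmap, Matrix.add_mulVec, dotProduct_add, e1, e2] at hneg
  have hre : ((starRingEnd ℂ) z * c + z * c).re = 2 * z.re * c.re := by
    have : (starRingEnd ℂ) z * c + z * c = ((2 * z.re : ℝ) : ℂ) * c := by
      push_cast
      rw [← add_mul]
      congr 1
      rw [add_comm]
      simpa using Complex.add_conj z
    rw [this, Complex.re_ofReal_mul]
  rw [hre] at hneg
  have hcre := posdef_complexify hv hy
  nlinarith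


/-- applying a matrix to a fixed vector, as a linear map in the matrix -/
def mulVecCLM (x : Fin d → ℂ) : Matrix (Fin d) (Fin d) ℂ →ₗ[ℂ] (Fin d → ℂ) where
  toFun B := B *ᵥ x
  map_add' B C := Matrix.add_mulVec B C x
  map_smul' c B := Matrix.smul_mulVec c B x

lemma mulVec_exp_eig (A : Matrix (Fin d) (Fin d) ℂ) {x : Fin d → ℂ} {l : ℂ}
    (h : A *ᵥ x = l • x) : exp A *ᵥ x = Complex.exp l • x := by
  have hpow : ∀ n : ℕ, A ^ n *ᵥ x = l ^ n • x := by
    intro n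
    induction n with
    | zero => simp
    | succ n ih =>
      rw [pow_succ, ← Matrix.mulVec_mulVec, h, Matrix.mulVec_smul, ih, smul_smul, pow_succ,
        mul_comm]
  have hsum : Summable (fun n : ℕ => (n !⁻¹ : ℂ) • A ^ n) := expSeries_summable' A
  have hcont : Continuous (mulVecCLM x) := (mulVecCLM x).continuous_of_finiteDimensional
  have := hsum.hasSum.mapL ⟨mulVecCLM x, hcont⟩
  rw [exp_eq_tsum ℂ]
  have heq : (⟨mulVecCLM x, hcont⟩ : Matrix (Fin d) (Fin d) ℂ →L[ℂ] (Fin d → ℂ))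
      (∑' n : ℕ, (n !⁻¹ : ℂ) • A ^ n) = ∑' n : ℕ, ((n !⁻¹ : ℂ) * l ^ n) • x := by
    rw [ContinuousLinearMap.map_tsum _ hsum]
    refine tsum_congr fun n => ?_
    show ((n !⁻¹ : ℂ) • A ^ n) *ᵥ x = _
    rw [Matrix.smul_mulVec, hpow, smul_smul]
  have hx : (⟨mulVecCLM x, hcont⟩ : Matrix (Fin d) (Fin d) ℂ →L[ℂ] (Fin d → ℂ))
      (∑' n : ℕ, (n !⁻¹ : ℂ) • A ^ n) = (∑' n : ℕ, (n !⁻¹ : ℂ) • A ^ n) *ᵥ x := rfl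
  rw [← hx, heq]
  have hsuml : Summable (fun n : ℕ => (n !⁻¹ : ℂ) * l ^ n) := by
    simpa [smul_eq_mul] using expSeries_summable' (𝕂 := ℂ) l
  rw [Summable.tsum_smul_const hsuml]
  congr 1
  rw [Complex.exp_eq_exp_ℂ, exp_eq_tsum ℂ]
  simp [smul_eq_mul]

lemma exp_eig_exists (M : Matrix (Fin d) (Fin d) ℂ) {μ : ℂ} {x : Fin d → ℂ} (hx : x ≠ 0)
    (h : exp M *ᵥ x = μ • x) :
    ∃ l : ℂ, (∃ y : Fin d → ℂ, y ≠ 0 ∧ M *ᵥ y = l • y) ∧ μ = Complex.exp l := by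
  classical
  set E := exp M with hE
  set g : Module.End ℂ (Fin d → ℂ) := E.mulVecLin - μ • 1 with hg
  set K := LinearMap.ker g with hK
  have memK : ∀ y, y ∈ K ↔ E *ᵥ y = μ • y := by
    intro y
    simp only [hK, LinearMap.mem_ker, hg, LinearMap.sub_apply, LinearMap.smul_apply,
      Module.End.one_apply, Matrix.mulVecLin_apply, sub_eq_zero]
  have hxK : x ∈ K := (memK x).2 h
  haveI : Nontrivial K := by
    refine ⟨⟨x, hxK⟩, 0, ?_⟩
    intro hc
    exact hx (by simpa [Subtype.ext_iff] using hc)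
  have hME : M * E = E * M := (Commute.refl M).exp_right.eq
  have hinv : ∀ y ∈ K, M.mulVecLin y ∈ K := by
    intro y hy
    rw [memK] at hy ⊢
    rw [Matrix.mulVecLin_apply, Matrix.mulVec_mulVec, ← hME, ← Matrix.mulVec_mulVec, hy,
      Matrix.mulVec_smul]
  set f' := M.mulVecLin.restrict hinv with hf'
  obtain ⟨l, hl⟩ := Module.End.exists_eigenvalue f'
  obtain ⟨⟨y, hyK⟩, hy⟩ := hl.exists_hasEigenvector
  have hy0 : y ≠ 0 := by
    intro hc
    exact hy.2 (by simp [Subtype.ext_iff, hc])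
  have hMy : M *ᵥ y = l • y := by
    have := congrArg Subtype.val hy.apply_eq_smul
    simpa [hf', LinearMap.restrict_apply, Matrix.mulVecLin_apply] using this
  refine ⟨l, ⟨y, hy0, hMy⟩, ?_⟩
  have h1 : E *ᵥ y = μ • y := (memK y).1 hyK
  have h2 : E *ᵥ y = Complex.exp l • y := mulVec_exp_eig M hMy
  have h3 : (μ - Complex.exp l) • y = 0 := by
    rw [sub_smul, ← h1, ← h2, sub_self]
  rcases smul_eq_zero.1 h3 with h4 | h4
  · exact (sub_eq_zero.1 h4)
  · exact absurd h4 hy0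


lemma spectrum_mem_iff_eig (A : Matrix (Fin d) (Fin d) ℂ) (z : ℂ) :
    z ∈ spectrum ℂ A ↔ ∃ x, x ≠ 0 ∧ A *ᵥ x = z • x := by
  rw [spectrum.mem_iff, Algebra.algebraMap_eq_smul_one, Matrix.isUnit_iff_isUnit_det,
    isUnit_iff_ne_zero, not_ne_iff, ← Matrix.exists_mulVec_eq_zero_iff]
  have key : ∀ x : Fin d → ℂ, (z • (1 : Matrix (Fin d) (Fin d) ℂ) - A) *ᵥ x
      = z • x - A *ᵥ x := by
    intro x
    rw [Matrix.sub_mulVec, Matrix.smul_mulVec, Matrix.one_mulVec]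
  constructor
  · rintro ⟨x, hx, hx2⟩
    rw [key, sub_eq_zero] at hx2
    exact ⟨x, hx, hx2.symm⟩
  · rintro ⟨x, hx, hx2⟩
    exact ⟨x, hx, by rw [key, hx2, sub_self]⟩

lemma pow_decay (β : Matrix (Fin d) (Fin d) ℝ) (hd : 0 < d)
    (h : ∀ z ∈ matCSpectrum β, z.re < 0) :
    ∃ r : ℝ, 0 < r ∧ r < 1 ∧ ∃ N : ℕ, ∀ n ≥ max N 1,
      ‖exp (β.map Complex.ofReal) ^ n‖ ≤ r ^ n := by
  haveI : Nonempty (Fin d) := ⟨⟨0, hd⟩⟩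
  haveI : Nontrivial (Matrix (Fin d) (Fin d) ℂ) := by
    refine ⟨1, 0, fun hc => ?_⟩
    have := congrFun (congrFun hc ⟨0, hd⟩) ⟨0, hd⟩
    simp [Matrix.one_apply] at this
  set M := β.map Complex.ofReal with hM
  set E := exp M with hE
  have hsp : ∀ z ∈ spectrum ℂ E, ‖z‖₊ < 1 := by
    intro z hz
    obtain ⟨x, hx, hEx⟩ := (spectrum_mem_iff_eig E z).1 hz
    obtain ⟨l, hl, rfl⟩ := exp_eig_exists M hx hEx
    have hlre : l.re < 0 := h l hl
    have h1 : ‖Complex.exp l‖ < 1 := by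
      rw [Complex.norm_exp]
      exact Real.exp_lt_one_iff.2 hlre
    exact_mod_cast h1
  have hρ : spectralRadius ℂ E < (1 : ℝ≥0) := spectrum.spectralRadius_lt_of_forall_lt (a := E) hsp
  set ρ := spectralRadius ℂ E with hρdef
  have hρtop : ρ ≠ ⊤ := (lt_of_lt_of_le hρ le_top).ne
  have hρ1 : ρ.toNNReal < 1 := by
    rw [← ENNReal.coe_lt_coe, ENNReal.coe_toNNReal hρtop]
    exact_mod_cast hρ
  set r : NNReal := (ρ.toNNReal + 1) / 2 with hr
  have hr1 : (r : ℝ) < 1 := by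
    rw [hr]
    push_cast
    have h1 : ρ.toReal < 1 := by exact_mod_cast hρ1
    linarith
  have hr0 : 0 < (r : ℝ) := by
    rw [hr]
    push_cast
    have h1 : (0:ℝ) ≤ ρ.toReal := ENNReal.toReal_nonneg
    linarith
  have hρr : ρ < (r : ℝ≥0∞) := by
    rw [← ENNReal.coe_toNNReal hρtop, ENNReal.coe_lt_coe, hr, ← NNReal.coe_lt_coe]
    push_cast
    have h1 : ρ.toReal < 1 := by exact_mod_cast hρ1
    linarith
  have htend := spectrum.pow_nnnorm_pow_one_div_tendsto_nhds_spectralRadius E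
  have hev : ∀ᶠ n : ℕ in Filter.atTop, (‖E ^ n‖₊ : ℝ≥0∞) ^ (1 / (n : ℝ)) < (r : ℝ≥0∞) :=
    htend.eventually_lt_const hρr
  obtain ⟨N, hN⟩ := Filter.eventually_atTop.1 hev
  refine ⟨(r : ℝ), hr0, hr1, N, fun n hn => ?_⟩
  have hn1 : 1 ≤ n := le_trans (le_max_right N 1) hn
  have hnne : (n : ℝ) ≠ 0 := by positivity
  have h1 := (hN n (le_trans (le_max_left N 1) hn)).le
  have h2 : ((‖E ^ n‖₊ : ℝ≥0∞) ^ (1 / (n : ℝ))) ^ (n : ℝ) ≤ (r : ℝ≥0∞) ^ (n : ℝ) :=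
    ENNReal.rpow_le_rpow h1 (by positivity)
  rw [← ENNReal.rpow_mul, one_div, inv_mul_cancel₀ hnne, ENNReal.rpow_one] at h2
  rw [ENNReal.rpow_natCast, ← ENNReal.coe_pow, ENNReal.coe_le_coe] at h2
  calc ‖E ^ n‖ = ((‖E ^ n‖₊ : ℝ)) := rfl
    _ ≤ ((r ^ n : ℝ≥0) : ℝ) := by exact_mod_cast h2
    _ = (r : ℝ) ^ n := by push_cast; ring

lemma norm_map_ofReal (A : Matrix (Fin d) (Fin d) ℝ) : ‖A.map Complex.ofReal‖ = ‖A‖ := by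
  rw [← coe_nnnorm, ← coe_nnnorm]
  congr 1
  rw [Matrix.linfty_opNNNorm_def, Matrix.linfty_opNNNorm_def]
  congr 1
  ext i
  congr 1
  refine Finset.sum_congr rfl fun j _ => ?_
  rw [Matrix.map_apply, Complex.nnnorm_real]

lemma map_exp_smul (β : Matrix (Fin d) (Fin d) ℝ) (t : ℝ) :
    (exp (t • β)).map Complex.ofReal = exp (t • β.map Complex.ofReal) := by
  have hφ : Continuous (Complex.ofRealHom.mapMatrix :
      Matrix (Fin d) (Fin d) ℝ →+* Matrix (Fin d) (Fin d) ℂ) :=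
    continuous_id.matrix_map Complex.continuous_ofReal
  have h1 := map_exp (Complex.ofRealHom.mapMatrix :
      Matrix (Fin d) (Fin d) ℝ →+* Matrix (Fin d) (Fin d) ℂ) hφ (t • β)
  rw [RingHom.mapMatrix_apply] at h1
  have h2 : (Complex.ofRealHom.mapMatrix (t • β) : Matrix (Fin d) (Fin d) ℂ)
      = t • β.map Complex.ofReal := by
    ext i j
    simp [RingHom.mapMatrix_apply, Matrix.map_apply, Matrix.smul_apply, Complex.real_smul]
  rw [h2] at h1
  have h3 : (exp (t • β)).map Complex.ofReal
      = (exp (t • β)).map Complex.ofRealHom := rfl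
  rw [h3, h1]

lemma exp_decay (β : Matrix (Fin d) (Fin d) ℝ) (hd : 0 < d)
    (h : ∀ z ∈ matCSpectrum β, z.re < 0) :
    ∃ C ε : ℝ, 0 < ε ∧ ∀ t : ℝ, 0 ≤ t → ‖exp (t • β)‖ ≤ C * Real.exp (-ε * t) := by
  obtain ⟨r, hr0, hr1, N, hN⟩ := pow_decay β hd h
  set M := β.map Complex.ofReal with hM
  set ε := -Real.log r with hε
  have hlog : Real.log r < 0 := Real.log_neg hr0 hr1
  have hε0 : 0 < ε := by rw [hε]; linarith
  set N' := max N 1 with hN'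
  have hcont : Continuous fun t : ℝ => exp (t • M) :=
    exp_continuous.comp (continuous_id.smul continuous_const)
  obtain ⟨B, hB⟩ := (isCompact_Icc (a := (0:ℝ)) (b := 1)).exists_bound_of_continuousOn
    hcont.continuousOn
  obtain ⟨C₁, hC₁⟩ := (isCompact_Icc (a := (0:ℝ)) (b := (N' : ℝ))).exists_bound_of_continuousOn
    hcont.continuousOn
  have hB0 : 0 ≤ B := le_trans (norm_nonneg _) (hB 0 ⟨le_refl 0, zero_le_one⟩)
  have key : ∀ t : ℝ, (N' : ℝ) ≤ t → ‖exp (t • M)‖ ≤ B * Real.exp ε * Real.exp (-ε * t) := by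
    intro t ht
    have ht0 : (0:ℝ) ≤ t := le_trans (by positivity) ht
    set n := ⌊t⌋₊ with hn
    have hNn : N' ≤ n := Nat.le_floor ht
    have hfl : (n : ℝ) ≤ t := Nat.floor_le ht0
    have hfl2 : t < (n : ℝ) + 1 := Nat.lt_floor_add_one t
    have hsplit : exp (t • M) = exp M ^ n * exp ((t - n) • M) := by
      have hdecomp : t • M = (n : ℝ) • M + (t - n) • M := by
        rw [← add_smul]; ring_nf
      rw [hdecomp, exp_add_of_commute (((Commute.refl M).smul_left ((n:ℝ))).smul_right (t - n)),
        Nat.cast_smul_eq_nsmul, NormedSpace.exp_nsmul]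
    rw [hsplit]
    have h1 : ‖exp M ^ n‖ ≤ r ^ n := hN n hNn
    have h2 : ‖exp ((t - n) • M)‖ ≤ B := hB _ ⟨by linarith, by linarith⟩
    calc ‖exp M ^ n * exp ((t - n) • M)‖
        ≤ ‖exp M ^ n‖ * ‖exp ((t - n) • M)‖ := norm_mul_le _ _
      _ ≤ r ^ n * B := mul_le_mul h1 h2 (norm_nonneg _) (by positivity)
      _ ≤ (Real.exp ε * Real.exp (-ε * t)) * B := by
          refine mul_le_mul_of_nonneg_right ?_ hB0
          have hrn : r ^ n = Real.exp (n * Real.log r) := by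
            rw [Real.exp_nat_mul, Real.exp_log hr0]
          rw [hrn, ← Real.exp_add]
          refine Real.exp_le_exp.2 ?_
          have hth : t - 1 ≤ (n : ℝ) := by linarith
          have := mul_le_mul_of_nonpos_right hth hlog.le
          rw [hε]
          nlinarith [this]
      _ = B * Real.exp ε * Real.exp (-ε * t) := by ring
  refine ⟨max (B * Real.exp ε) (C₁ * Real.exp (ε * N')), ε, hε0, fun t ht => ?_⟩
  have hnorm : ‖exp (t • β)‖ = ‖exp (t • M)‖ := by
    rw [← norm_map_ofReal, map_exp_smul]
  rw [hnorm]
  rcases le_or_gt (N' : ℝ) t with hcase | hcase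
  · calc ‖exp (t • M)‖ ≤ B * Real.exp ε * Real.exp (-ε * t) := key t hcase
      _ ≤ max (B * Real.exp ε) (C₁ * Real.exp (ε * N')) * Real.exp (-ε * t) :=
          mul_le_mul_of_nonneg_right (le_max_left _ _) (Real.exp_nonneg _)
  · have hC₁t : ‖exp (t • M)‖ ≤ C₁ := hC₁ _ ⟨ht, hcase.le⟩
    have hC₁0 : 0 ≤ C₁ := le_trans (norm_nonneg _) (hC₁ 0 ⟨le_refl 0, by positivity⟩)
    calc ‖exp (t • M)‖ ≤ C₁ := hC₁t
      _ = C₁ * Real.exp (ε * t) * Real.exp (-ε * t) := by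
          rw [mul_assoc, ← Real.exp_add]; ring_nf; rw [Real.exp_zero, mul_one]
      _ ≤ C₁ * Real.exp (ε * N') * Real.exp (-ε * t) := by
          refine mul_le_mul_of_nonneg_right ?_ (Real.exp_nonneg _)
          exact mul_le_mul_of_nonneg_left (Real.exp_le_exp.2 (by nlinarith)) hC₁0
      _ ≤ max (B * Real.exp ε) (C₁ * Real.exp (ε * N')) * Real.exp (-ε * t) :=
          mul_le_mul_of_nonneg_right (le_max_right _ _) (Real.exp_nonneg _)

open MeasureTheory Filter in
lemma lyapunov_forward (β : Matrix (Fin d) (Fin d) ℝ) (hd : 0 < d)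
    (h : ∀ z ∈ matCSpectrum β, z.re < 0) :
    ∃ v : Matrix (Fin d) (Fin d) ℝ, v.PosDef ∧ (-(β * v + v * βᵀ)).PosDef := by
  obtain ⟨C₁, ε₁, hε₁, hdecay₁⟩ := exp_decay β hd h
  have hT : ∀ z ∈ matCSpectrum βᵀ, z.re < 0 := by
    intro z hz
    rw [matCSpectrum_transpose] at hz
    exact h z hz
  obtain ⟨C₂, ε₂, hε₂, hdecay₂⟩ := exp_decay βᵀ hd hT
  set g : ℝ → Matrix (Fin d) (Fin d) ℝ := fun t => exp (t • β) * exp (t • βᵀ) with hg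
  have hgcont : Continuous g := (exp_continuous.comp (continuous_id.smul continuous_const)).mul
      (exp_continuous.comp (continuous_id.smul continuous_const))
  have hgbound : ∀ t : ℝ, 0 ≤ t → ‖g t‖ ≤ (C₁ * C₂) * Real.exp (-(ε₁ + ε₂) * t) := by
    intro t ht
    have h1 := hdecay₁ t ht
    have h2 := hdecay₂ t ht
    have e1 : (0:ℝ) ≤ C₁ * Real.exp (-ε₁ * t) := le_trans (norm_nonneg _) h1
    calc ‖g t‖ ≤ ‖exp (t • β)‖ * ‖exp (t • βᵀ)‖ := norm_mul_le _ _
      _ ≤ (C₁ * Real.exp (-ε₁ * t)) * (C₂ * Real.exp (-ε₂ * t)) :=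
          mul_le_mul h1 h2 (norm_nonneg _) e1
      _ = (C₁ * C₂) * Real.exp (-(ε₁ + ε₂) * t) := by
          rw [show -(ε₁ + ε₂) * t = -ε₁ * t + -ε₂ * t by ring, Real.exp_add]; ring
  have hbound_int : IntegrableOn (fun t : ℝ => (C₁ * C₂) * Real.exp (-(ε₁ + ε₂) * t))
      (Set.Ioi (0:ℝ)) := (exp_neg_integrableOn_Ioi 0 (by linarith)).const_mul _
  have hgint : IntegrableOn g (Set.Ioi (0:ℝ)) := by
    refine Integrable.mono' hbound_int hgcont.aestronglyMeasurable.restrict ?_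
    filter_upwards [ae_restrict_mem measurableSet_Ioi] with t ht
    exact hgbound t (le_of_lt ht)
  set v₀ : Matrix (Fin d) (Fin d) ℝ := ∫ t in Set.Ioi (0:ℝ), g t with hv₀
  -- transposes of the exponentials
  have hexpT : ∀ t : ℝ, (exp (t • β))ᵀ = exp (t • βᵀ) := by
    intro t
    rw [← Matrix.transpose_smul]
    exact (Matrix.exp_transpose _).symm
  have hexpT' : ∀ t : ℝ, (exp (t • βᵀ))ᵀ = exp (t • β) := by
    intro t
    exact (Matrix.exp_transpose _).symm.trans (by rw [Matrix.transpose_smul, Matrix.transpose_transpose]; rfl)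
  have hgT : ∀ t : ℝ, (g t)ᵀ = g t := by
    intro t
    rw [hg]
    show (exp (t • β) * exp (t • βᵀ))ᵀ = _
    rw [Matrix.transpose_mul, hexpT, hexpT']
  -- v₀ is symmetric
  set Tr : Matrix (Fin d) (Fin d) ℝ →L[ℝ] Matrix (Fin d) (Fin d) ℝ :=
    ⟨(Matrix.transposeLinearEquiv (Fin d) (Fin d) ℝ ℝ).toLinearMap,
      (Matrix.transposeLinearEquiv (Fin d) (Fin d) ℝ ℝ).toLinearMap.continuous_of_finiteDimensional⟩
    with hTr
  have hv₀T : v₀ᵀ = v₀ := by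
    have h1 : v₀ᵀ = Tr v₀ := rfl
    rw [h1, hv₀, ← Tr.integral_comp_comm hgint]
    refine integral_congr_ae (Filter.Eventually.of_forall fun t => ?_)
    exact hgT t
  -- the Lyapunov operator
  set L : Matrix (Fin d) (Fin d) ℝ →L[ℝ] Matrix (Fin d) (Fin d) ℝ :=
    ⟨LinearMap.mulLeft ℝ β + LinearMap.mulRight ℝ βᵀ,
      (LinearMap.mulLeft ℝ β + LinearMap.mulRight ℝ βᵀ).continuous_of_finiteDimensional⟩
    with hL
  have hLapply : ∀ A : Matrix (Fin d) (Fin d) ℝ, L A = β * A + A * βᵀ := fun A => rfl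
  have hLgint : IntegrableOn (fun t => L (g t)) (Set.Ioi (0:ℝ)) := L.integrable_comp hgint
  have hderiv : ∀ t : ℝ, HasDerivAt g (L (g t)) t := by
    intro t
    have h1 : HasDerivAt (fun u : ℝ => exp (u • β)) (β * exp (t • β)) t :=
      hasDerivAt_exp_smul_const' β t
    have h2 : HasDerivAt (fun u : ℝ => exp (u • βᵀ)) (exp (t • βᵀ) * βᵀ) t :=
      hasDerivAt_exp_smul_const βᵀ t
    have h3 := h1.mul h2
    have h4 : β * exp (t • β) * exp (t • βᵀ) + exp (t • β) * (exp (t • βᵀ) * βᵀ)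
        = L (g t) := by
      rw [hLapply, hg]
      show _ = β * (exp (t • β) * exp (t • βᵀ)) + exp (t • β) * exp (t • βᵀ) * βᵀ
      rw [mul_assoc, mul_assoc]
    rw [h4] at h3
    exact h3
  have hFTC : ∀ T : ℝ, (∫ t in (0:ℝ)..T, L (g t)) = g T - 1 := by
    intro T
    rw [intervalIntegral.integral_eq_sub_of_hasDerivAt (fun t _ => hderiv t)
      ((L.continuous.comp hgcont).intervalIntegrable 0 T)]
    congr 1
    rw [hg]
    show exp ((0:ℝ) • β) * exp ((0:ℝ) • βᵀ) = 1
    rw [zero_smul, zero_smul, exp_zero, one_mul]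
  have hglim : Tendsto g atTop (𝓝 0) := by
    refine squeeze_zero_norm' (a := fun t : ℝ => (C₁ * C₂) * Real.exp (-(ε₁ + ε₂) * t)) ?_ ?_
    · filter_upwards [eventually_ge_atTop (0:ℝ)] with t ht
      exact hgbound t ht
    · have h5 : Tendsto (fun t : ℝ => (ε₁ + ε₂) * t) atTop atTop :=
        Tendsto.const_mul_atTop (by linarith) tendsto_id
      have h6 : Tendsto (fun t : ℝ => Real.exp (-(ε₁ + ε₂) * t)) atTop (𝓝 0) := by
        have := Real.tendsto_exp_neg_atTop_nhds_zero.comp h5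
        refine this.congr fun t => ?_
        show Real.exp (-((ε₁ + ε₂) * t)) = Real.exp (-(ε₁ + ε₂) * t)
        ring_nf
      have h7 := h6.const_mul (C₁ * C₂)
      simpa using h7
  have hlim1 : Tendsto (fun T : ℝ => ∫ t in (0:ℝ)..T, L (g t)) atTop
      (𝓝 (∫ t in Set.Ioi (0:ℝ), L (g t))) :=
    intervalIntegral_tendsto_integral_Ioi 0 hLgint tendsto_id
  have hlim2 : Tendsto (fun T : ℝ => ∫ t in (0:ℝ)..T, L (g t)) atTop (𝓝 (0 - 1)) := by
    have h8 : Tendsto (fun T : ℝ => g T - 1) atTop (𝓝 (0 - 1)) := hglim.sub tendsto_const_nhds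
    refine h8.congr fun T => (hFTC T).symm
  have hint_eq : (∫ t in Set.Ioi (0:ℝ), L (g t)) = -1 := by
    have := tendsto_nhds_unique hlim1 hlim2
    rw [this, zero_sub]
  have hlyap : β * v₀ + v₀ * βᵀ = -1 := by
    rw [← hLapply, hv₀, ← L.integral_comp_comm hgint, hint_eq]
  -- positive definiteness of v₀
  have hv₀posdef : v₀.PosDef := by
    refine Matrix.PosDef.of_dotProduct_mulVec_pos ?_ ?_
    · show v₀ᴴ = v₀
      ext i j
      rw [Matrix.conjTranspose_apply, star_trivial]
      exact congrFun (congrFun hv₀T i) j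
    · intro x hx
      set Q : Matrix (Fin d) (Fin d) ℝ →L[ℝ] ℝ :=
        ⟨{ toFun := fun A => x ⬝ᵥ (A *ᵥ x)
           map_add' := fun A B => by
             show x ⬝ᵥ ((A + B) *ᵥ x) = x ⬝ᵥ (A *ᵥ x) + x ⬝ᵥ (B *ᵥ x)
             rw [Matrix.add_mulVec, dotProduct_add]
           map_smul' := fun c A => by
             show x ⬝ᵥ ((c • A) *ᵥ x) = c * (x ⬝ᵥ (A *ᵥ x))
             rw [Matrix.smul_mulVec, dotProduct_smul, smul_eq_mul] },
          LinearMap.continuous_of_finiteDimensional _⟩ with hQ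
      have hQapply : ∀ A : Matrix (Fin d) (Fin d) ℝ, Q A = x ⬝ᵥ (A *ᵥ x) := fun A => rfl
      have hQg : ∀ t : ℝ, Q (g t) = (exp (t • βᵀ) *ᵥ x) ⬝ᵥ (exp (t • βᵀ) *ᵥ x) := by
        intro t
        rw [hQapply, hg]
        show x ⬝ᵥ ((exp (t • β) * exp (t • βᵀ)) *ᵥ x) = _
        rw [← Matrix.mulVec_mulVec, Matrix.dotProduct_mulVec, ← Matrix.mulVec_transpose, hexpT]
      have hQpos : ∀ t : ℝ, 0 < Q (g t) := by
        intro t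
        rw [hQg]
        set w := exp (t • βᵀ) *ᵥ x with hw
        have hw0 : w ≠ 0 := by
          intro hc
          apply hx
          have h9 : exp (-(t • βᵀ)) *ᵥ (exp (t • βᵀ) *ᵥ x) = x := by
            rw [Matrix.mulVec_mulVec, ← exp_add_of_commute (Commute.refl (t • βᵀ)).neg_left,
              neg_add_cancel, exp_zero, Matrix.one_mulVec]
          rw [← h9, ← hw, hc, Matrix.mulVec_zero]
        have hnn : 0 ≤ w ⬝ᵥ w := Finset.sum_nonneg fun i _ => mul_self_nonneg (w i)
        have hne : w ⬝ᵥ w ≠ 0 := fun hc => hw0 (dotProduct_self_eq_zero.1 hc)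
        exact lt_of_le_of_ne hnn (Ne.symm hne)
      have hQint : IntegrableOn (fun t => Q (g t)) (Set.Ioi (0:ℝ)) := Q.integrable_comp hgint
      have hpos : 0 < ∫ t in Set.Ioi (0:ℝ), Q (g t) := by
        rw [setIntegral_pos_iff_support_of_nonneg_ae
          (Filter.Eventually.of_forall fun t => (hQpos t).le) hQint]
        have hsup : Function.support (fun t => Q (g t)) ∩ Set.Ioi (0:ℝ) = Set.Ioi (0:ℝ) := by
          refine Set.inter_eq_right.2 fun t _ => ?_
          exact (hQpos t).ne'
        rw [hsup, Real.volume_Ioi]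
        exact ENNReal.zero_lt_top
      have h10 : star x ⬝ᵥ (v₀ *ᵥ x) = Q v₀ := by rw [hQapply, star_trivial]
      rw [h10, hv₀, ← Q.integral_comp_comm hgint]
      exact hpos
  refine ⟨v₀, hv₀posdef, ?_⟩
  rw [hlyap, neg_neg]
  exact Matrix.PosDef.one


end LyapunovAux

/-- Every complex eigenvalue of a real `d×d` matrix `β` has strictly negative real part iff
there is a symmetric positive definite real matrix `v` such that `βv + vβᵀ` is negative
definite. -/
theorem eigenvalues_neg_re_iff_lyapunov {d : ℕ} (β : Matrix (Fin d) (Fin d) ℝ) :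
    (∀ z ∈ matCSpectrum β, z.re < 0) ↔
      ∃ v : Matrix (Fin d) (Fin d) ℝ, v.PosDef ∧ (-(β * v + v * βᵀ)).PosDef := by
  constructor
  · intro h
    rcases Nat.eq_zero_or_pos d with hd | hd
    · subst hd
      refine ⟨1, ?_, ?_⟩ <;>
        exact ⟨Subsingleton.elim _ _, fun x hx => absurd (Subsingleton.elim x 0) hx⟩
    · exact lyapunov_forward β hd h
  · rintro ⟨v, hv, hS⟩
    exact lyapunov_backward hv hS

end
end

section
/- Let β be a real d×d matrix and let L be the ℂ-linear operator on the space of complex symmetric d×d matrices defined by L(M) = βM + Mβ^⊤. Then the set of eigenvalues of L equals {λ + μ : λ, μ ∈ σ(β)}, where σ(β) denotes the set of complex eigenvalues of β. In particular, max{Re ν : ν eigenvalue of L} = 2·max{Re λ : λ ∈ σ(β)}, so all eigenvalues of L have strictly negative real part if and only if all eigenvalues of β do. -/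
open Matrix

noncomputable section

/-- The set of eigenvalues of the operator `M ↦ βM + Mβᵀ` on the space of complex symmetric
`d×d` matrices: `ν` is an eigenvalue iff it has a nonzero symmetric eigenmatrix. -/
def lyapSpectrum {d : ℕ} (β : Matrix (Fin d) (Fin d) ℝ) : Set ℂ :=
  {ν : ℂ | ∃ M : Matrix (Fin d) (Fin d) ℂ, Mᵀ = M ∧ M ≠ 0 ∧
      (β.map Complex.ofReal) * M + M * (β.map Complex.ofReal)ᵀ = ν • M}

open Polynomial in
lemma aux_eigen_iff_det {d : ℕ} (A : Matrix (Fin d) (Fin d) ℂ) (z : ℂ) :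
    (∃ x : Fin d → ℂ, x ≠ 0 ∧ A.mulVec x = z • x) ↔ (A - z • 1).det = 0 := by
  rw [← Matrix.exists_mulVec_eq_zero_iff]
  constructor
  · rintro ⟨x, hx, h⟩
    exact ⟨x, hx, by
      rw [Matrix.sub_mulVec, Matrix.smul_mulVec, Matrix.one_mulVec, h, sub_self]⟩
  · rintro ⟨x, hx, h⟩
    refine ⟨x, hx, ?_⟩
    rwa [Matrix.sub_mulVec, Matrix.smul_mulVec, Matrix.one_mulVec, sub_eq_zero] at h

open Polynomial in
lemma aux_eval_charpoly {d : ℕ} (A : Matrix (Fin d) (Fin d) ℂ) (z : ℂ) :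
    A.charpoly.eval z = (z • 1 - A).det := by
  have : A.charpoly.eval z = (evalRingHom z) (charmatrix A).det := rfl
  rw [this, RingHom.map_det]
  congr 1
  ext i j
  by_cases h : i = j
  · subst h
    simp [charmatrix_apply_eq, Matrix.one_apply, Matrix.smul_apply]
  · simp [charmatrix_apply_ne _ _ _ h, Matrix.one_apply, h, Matrix.smul_apply]

lemma aux_chain {d : ℕ} (B C M : Matrix (Fin d) (Fin d) ℂ) (hBC : B * M = M * C)
    (l : List ℂ) (v : Fin d → ℂ)
    (h : M.mulVec (((l.map fun μ => C - μ • 1).prod).mulVec v) = 0)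
    (hv : M.mulVec v ≠ 0) :
    ∃ μ ∈ l, ∃ u : Fin d → ℂ, u ≠ 0 ∧ B.mulVec u = μ • u := by
  induction l generalizing v with
  | nil => simp only [List.map_nil, List.prod_nil, Matrix.one_mulVec] at h; exact absurd h hv
  | cons μ t ih =>
    set v' := ((t.map fun μ => C - μ • 1).prod).mulVec v with hv'
    by_cases h0 : M.mulVec v' = 0
    · obtain ⟨μ', hμ', hu⟩ := ih v h0 hv
      exact ⟨μ', List.mem_cons_of_mem _ hμ', hu⟩
    · refine ⟨μ, List.mem_cons_self, M.mulVec v', h0, ?_⟩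
      have key : M.mulVec ((C - μ • 1).mulVec v') = 0 := by
        rw [List.map_cons, List.prod_cons] at h
        simpa only [hv', Matrix.mulVec_mulVec, mul_assoc] using h
      rw [Matrix.sub_mulVec, Matrix.smul_mulVec, Matrix.one_mulVec,
        Matrix.mulVec_sub, Matrix.mulVec_smul, sub_eq_zero] at key
      rw [Matrix.mulVec_mulVec, hBC, ← Matrix.mulVec_mulVec, key]

/-- Any nonzero matrix has a nonzero column. -/
lemma aux_exists_mulVec_ne_zero {d : ℕ} {M : Matrix (Fin d) (Fin d) ℂ} (hM : M ≠ 0) :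
    ∃ v : Fin d → ℂ, M.mulVec v ≠ 0 := by
  by_contra h
  push_neg at h
  apply hM
  ext i j
  have := congrFun (h (Pi.single j 1)) i
  simpa [Matrix.mulVec_single] using this

/-- The eigenvalues of `L(M) = βM + Mβᵀ` on complex symmetric matrices are exactly the sums
of pairs of eigenvalues of `β`; in particular the maximal real part doubles and `L` is stable
iff `β` is. -/
theorem lyapSpectrum_eq_sum_spectrum {d : ℕ} (β : Matrix (Fin d) (Fin d) ℝ) :
    lyapSpectrum β = {ν : ℂ | ∃ l ∈ matCSpectrum β, ∃ m ∈ matCSpectrum β, ν = l + m} ∧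
    sSup (Complex.re '' lyapSpectrum β) = 2 * sSup (Complex.re '' matCSpectrum β) ∧
    ((∀ ν ∈ lyapSpectrum β, ν.re < 0) ↔ ∀ z ∈ matCSpectrum β, z.re < 0) := by
  classical
  set Bc : Matrix (Fin d) (Fin d) ℂ := β.map Complex.ofReal with hBc
  -- membership in matCSpectrum via determinants
  have hdet : ∀ z : ℂ, z ∈ matCSpectrum β ↔ (Bc - z • 1).det = 0 := fun z =>
    aux_eigen_iff_det Bc z
  -- Part 1
  have hpart1 : lyapSpectrum β =
      {ν : ℂ | ∃ l ∈ matCSpectrum β, ∃ m ∈ matCSpectrum β, ν = l + m} := by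
    ext ν
    constructor
    · rintro ⟨M, hsym, hM0, hM⟩
      -- B M = M C with C = ν•1 - Bcᵀ
      set C : Matrix (Fin d) (Fin d) ℂ := ν • 1 - Bcᵀ with hC
      have hBM : Bc * M = M * C := by
        rw [hC, Matrix.mul_sub, Matrix.mul_smul, mul_one, eq_sub_iff_add_eq]
        simpa using hM
      obtain ⟨v, hv⟩ := aux_exists_mulVec_ne_zero hM0
      -- charpoly of C splits
      obtain ⟨l, hl⟩ := Quotient.exists_rep C.charpoly.roots
      have hfact : C.charpoly = (l.map fun μ => Polynomial.X - Polynomial.C μ).prod := by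
        have := (IsAlgClosed.splits C.charpoly).eq_prod_roots_of_monic
          C.charpoly_monic
        rw [this, ← hl]
        rfl
      have hzero : ((l.map fun μ => C - μ • 1).prod) = 0 := by
        have h0 : (Polynomial.aeval C) C.charpoly = 0 := C.aeval_self_charpoly
        rw [hfact, map_list_prod, List.map_map] at h0
        rw [← h0]
        congr 1
        apply List.map_congr_left
        intro μ _
        simp [Function.comp, Algebra.algebraMap_eq_smul_one]
      obtain ⟨μ, hμl, u, hu, huB⟩ := aux_chain Bc C M hBM l v (by rw [hzero]; simp) hv
      -- μ is an eigenvalue of Bc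
      have hμspec : μ ∈ matCSpectrum β := ⟨u, hu, huB⟩
      -- μ is a root of charpoly of C, hence ν - μ is an eigenvalue of Bcᵀ hence of Bc
      have hμroot : μ ∈ C.charpoly.roots := by rw [← hl]; exact hμl
      have hcp0 : C.charpoly.eval μ = 0 :=
        (Polynomial.mem_roots (C.charpoly_monic.ne_zero)).1 hμroot
      rw [aux_eval_charpoly] at hcp0
      have hdet2 : (Bc - (ν - μ) • 1).det = 0 := by
        have : μ • (1 : Matrix (Fin d) (Fin d) ℂ) - C = (Bc - (ν - μ) • 1)ᵀ := by
          rw [hC, Matrix.transpose_sub, Matrix.transpose_smul, Matrix.transpose_one, sub_smul]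
          abel
        rw [this, Matrix.det_transpose] at hcp0
        exact hcp0
      have hm : ν - μ ∈ matCSpectrum β := (hdet ((ν : ℂ) - μ)).2 hdet2
      exact ⟨μ, hμspec, ν - μ, hm, by ring⟩
    · rintro ⟨l, ⟨x, hx, hxe⟩, m, ⟨y, hy, hye⟩, rfl⟩
      -- M = x yᵀ + y xᵀ
      set M : Matrix (Fin d) (Fin d) ℂ := Matrix.of fun i j => x i * y j + y i * x j with hMdef
      have hxe' : ∀ i, ∑ k, Bc i k * x k = l * x i := fun i => by
        have := congrFun hxe i
        simpa [Matrix.mulVec, dotProduct, hBc] using this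
      have hye' : ∀ i, ∑ k, Bc i k * y k = m * y i := fun i => by
        have := congrFun hye i
        simpa [Matrix.mulVec, dotProduct, hBc] using this
      refine ⟨M, ?_, ?_, ?_⟩
      · ext i j; simp [hMdef]; ring
      · -- M ≠ 0
        obtain ⟨i, hi⟩ := Function.ne_iff.1 hx
        obtain ⟨j, hj⟩ := Function.ne_iff.1 hy
        simp only [Pi.zero_apply] at hi hj
        intro h0
        have hii : x i * y i + y i * x i = 0 := by
          have := congrFun (congrFun h0 i) i; simpa [hMdef] using this
        have hjj : x j * y j + y j * x j = 0 := by
          have := congrFun (congrFun h0 j) j; simpa [hMdef] using this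
        have hij : x i * y j + y i * x j = 0 := by
          have := congrFun (congrFun h0 i) j; simpa [hMdef] using this
        have hyi : y i = 0 := by
          rcases mul_eq_zero.1 (by linear_combination hii / 2 : x i * y i = 0) with h | h
          · exact absurd h hi
          · exact h
        have hxj : x j = 0 := by
          rcases mul_eq_zero.1 (by linear_combination hjj / 2 : x j * y j = 0) with h | h
          · exact h
          · exact absurd h hj
        rw [hyi, hxj] at hij
        simp only [mul_zero, zero_mul, add_zero, zero_add] at hij
        rcases mul_eq_zero.1 hij with h | h
        · exact hi h
        · exact hj h
      · -- eigen equation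
        ext i j
        simp only [Matrix.add_apply, Matrix.mul_apply, Matrix.smul_apply, Matrix.transpose_apply,
          hMdef, Matrix.of_apply, smul_eq_mul]
        have e1 : ∑ k, Bc i k * (x k * y j + y k * x j)
            = (∑ k, Bc i k * x k) * y j + (∑ k, Bc i k * y k) * x j := by
          rw [Finset.sum_mul, Finset.sum_mul, ← Finset.sum_add_distrib]
          exact Finset.sum_congr rfl fun k _ => by ring
        have e2 : ∑ k, (x i * y k + y i * x k) * Bc j k
            = x i * (∑ k, Bc j k * y k) + y i * (∑ k, Bc j k * x k) := by
          rw [Finset.mul_sum, Finset.mul_sum, ← Finset.sum_add_distrib]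
          exact Finset.sum_congr rfl fun k _ => by ring
        rw [e1, e2, hxe' i, hye' i, hxe' j, hye' j]
        ring
  -- the spectrum is finite
  have hfin : (matCSpectrum β).Finite := by
    apply Set.Finite.subset (Bc.charpoly.roots.toFinset : Finset ℂ).finite_toSet
    intro z hz
    rw [hdet z] at hz
    simp only [Finset.coe_sort_coe, Multiset.mem_toFinset, Finset.mem_coe]
    have : Bc.charpoly.eval z = 0 := by
      rw [aux_eval_charpoly, ← neg_sub, Matrix.det_neg, hz, mul_zero]
    exact (Polynomial.mem_roots (Bc.charpoly_monic.ne_zero)).2 this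
  -- Part 3
  have hpart3 : (∀ ν ∈ lyapSpectrum β, ν.re < 0) ↔ ∀ z ∈ matCSpectrum β, z.re < 0 := by
    constructor
    · intro h z hz
      have h2 : (z + z) ∈ lyapSpectrum β := by
        rw [hpart1]; exact ⟨z, hz, z, hz, rfl⟩
      have := h _ h2
      rw [Complex.add_re] at this
      linarith
    · intro h ν hν
      rw [hpart1] at hν
      obtain ⟨l, hl, m, hm, rfl⟩ := hν
      rw [Complex.add_re]
      have := h l hl
      have := h m hm
      linarith
  -- Part 2
  have hpart2 : sSup (Complex.re '' lyapSpectrum β)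
      = 2 * sSup (Complex.re '' matCSpectrum β) := by
    rcases Set.eq_empty_or_nonempty (matCSpectrum β) with he | hne
    · rw [hpart1, he]
      simp [Real.sSup_empty]
    · set S : Set ℝ := Complex.re '' matCSpectrum β with hS
      have hSne : S.Nonempty := hne.image _
      have hSfin : S.Finite := hfin.image _
      have haS : sSup S ∈ S := hSne.csSup_mem hSfin
      have hub : ∀ b ∈ S, b ≤ sSup S := fun b hb => le_csSup hSfin.bddAbove hb
      obtain ⟨z, hz, hzre⟩ := haS
      set T : Set ℝ := Complex.re '' lyapSpectrum β with hT
      have hTub : ∀ t ∈ T, t ≤ 2 * sSup S := by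
        rintro t ⟨ν, hν, rfl⟩
        rw [hpart1] at hν
        obtain ⟨l, hl, m, hm, rfl⟩ := hν
        rw [Complex.add_re]
        have h1 := hub l.re ⟨l, hl, rfl⟩
        have h2 := hub m.re ⟨m, hm, rfl⟩
        linarith
      have hmem : 2 * sSup S ∈ T := by
        refine ⟨z + z, ?_, ?_⟩
        · rw [hpart1]; exact ⟨z, hz, z, hz, rfl⟩
        · rw [Complex.add_re, hzre]; ring
      exact le_antisymm (csSup_le ⟨_, hmem⟩ hTub) (le_csSup ⟨_, hTub⟩ hmem)
  exact ⟨hpart1, hpart2, hpart3⟩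

end
end

section
/- Let V be a finite-dimensional real inner product space, K ⊆ V a generating proper closed convex cone, and A : V → V a linear map. Then A is quasimonotone increasing with respect to K if and only if for every t ≥ 0 the matrix exponential satisfies exp(tA)(K) ⊆ K. -/
open scoped RealInnerProductSpace

noncomputable section

variable {V : Type*} [NormedAddCommGroup V] [InnerProductSpace ℝ V]

/-- The dual cone of a set `K` in a real inner product space. -/
def dualCone (K : Set V) : Set V := {u : V | ∀ x ∈ K, 0 ≤ ⟪u, x⟫}

/-- `K` is a generating proper closed convex cone. -/
structure IsGenProperClosedConvexCone (K : Set V) : Prop where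
  closed : IsClosed K
  convex : Convex ℝ K
  smul_mem : ∀ c : ℝ, 0 ≤ c → ∀ x ∈ K, c • x ∈ K
  generating : ∀ v : V, ∃ x ∈ K, ∃ y ∈ K, v = x - y
  proper : ∀ x ∈ K, -x ∈ K → x = 0

/-- `A` is quasimonotone increasing with respect to the cone `K`. -/
def IsQMI (K : Set V) (A : V →ₗ[ℝ] V) : Prop :=
  ∀ x ∈ K, ∀ v ∈ dualCone K, ⟪v, x⟫ = 0 → 0 ≤ ⟪v, A x⟫

variable [FiniteDimensional ℝ V]

/-- The set of complex eigenvalues of a real linear map, i.e. the complex roots of its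
characteristic polynomial. -/
def cSpectrum (A : V →ₗ[ℝ] V) : Set ℂ :=
  {z : ℂ | Polynomial.aeval z (LinearMap.charpoly A) = 0}

/-- The spectral bound `τ(A)`. -/
def specBound (A : V →ₗ[ℝ] V) : ℝ := sSup (Complex.re '' cSpectrum A)

/-- The spectral radius `ρ(A)`. -/
def specRadius (A : V →ₗ[ℝ] V) : ℝ := sSup ((fun z : ℂ => ‖z‖) '' cSpectrum A)

/-! ### Auxiliary lemmas -/

lemma IsGenProperClosedConvexCone.zero_mem' {K : Set V} (hK : IsGenProperClosedConvexCone K) :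
    (0:V) ∈ K := by
  obtain ⟨x, hx, y, hy, -⟩ := hK.generating 0
  simpa using hK.smul_mem 0 le_rfl x hx

lemma IsGenProperClosedConvexCone.add_mem' {K : Set V} (hK : IsGenProperClosedConvexCone K)
    {x y : V} (hx : x ∈ K) (hy : y ∈ K) : x + y ∈ K := by
  have h := hK.convex hx hy (by norm_num : (0:ℝ) ≤ 1/2) (by norm_num : (0:ℝ) ≤ 1/2)
    (by norm_num)
  have h2 := hK.smul_mem 2 (by norm_num) _ h
  convert h2 using 1
  rw [smul_add, smul_smul, smul_smul]
  norm_num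

/-- Existence of a metric projection onto the cone, with its variational characterization. -/
lemma exists_cone_proj {K : Set V} (hK : IsGenProperClosedConvexCone K) (u : V) :
    ∃ p ∈ K, (∀ k ∈ K, ⟪u - p, k⟫ ≤ 0) ∧ ⟪u - p, p⟫ = 0 ∧ ‖u - p‖ = Metric.infDist u K := by
  obtain ⟨p, hp, hmin⟩ := exists_norm_eq_iInf_of_complete_convex ⟨0, hK.zero_mem'⟩
    hK.closed.isComplete hK.convex u
  have hin := (norm_eq_iInf_iff_real_inner_le_zero hK.convex hp).1 hmin
  have hK2 : ∀ k ∈ K, ⟪u - p, k⟫ ≤ 0 := by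
    intro k hk
    have := hin (p + k) (hK.add_mem' hp hk)
    simpa using this
  have hpp : ⟪u - p, p⟫ = 0 := by
    have h1 := hin ((2:ℝ) • p) (hK.smul_mem 2 (by norm_num) p hp)
    have h2 := hin ((2⁻¹:ℝ) • p) (hK.smul_mem 2⁻¹ (by norm_num) p hp)
    have e1 : (2:ℝ) • p - p = p := by rw [two_smul]; abel
    have e2 : (2⁻¹:ℝ) • p - p = (2⁻¹ - 1 : ℝ) • p := by rw [sub_smul, one_smul]
    rw [e1] at h1
    rw [e2, real_inner_smul_right] at h2
    nlinarith [h1, h2]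
  refine ⟨p, hp, hK2, hpp, ?_⟩
  rw [Metric.infDist_eq_iInf, hmin]
  congr 1
  ext w
  rw [dist_eq_norm]

/-- Derivative of `s ↦ exp(sA) x`. -/
lemma hasDerivAt_exp_clm_apply (A' : V →L[ℝ] V) (x : V) (t : ℝ) :
    HasDerivAt (fun s : ℝ => NormedSpace.exp (s • A') x)
      (A' (NormedSpace.exp (t • A') x)) t := by
  have h := hasDerivAt_exp_smul_const' (𝕂 := ℝ) A' t
  have h2 := h.clm_apply (hasDerivAt_const t x)
  simpa using h2

/-- A linear map `A` on a finite-dimensional real inner product space is quasimonotone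
increasing with respect to a generating proper closed convex cone `K` iff for every `t ≥ 0`
the exponential `exp (t A)` maps `K` into `K`. -/
theorem qmi_iff_exp_maps_cone (K : Set V) (hK : IsGenProperClosedConvexCone K)
    (A : V →ₗ[ℝ] V) :
    IsQMI K A ↔
      ∀ t : ℝ, 0 ≤ t → ∀ x ∈ K,
        NormedSpace.exp (t • LinearMap.toContinuousLinearMap A) x ∈ K := by
  set A' := LinearMap.toContinuousLinearMap A with hA'def
  have hA'A : ∀ y : V, A' y = A y := fun y => rfl
  have hKne : K.Nonempty := ⟨0, hK.zero_mem'⟩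
  constructor
  · -- QMI → invariance, via Grönwall on squared distance to K
    intro hqmi t ht x hx
    set c : ℝ → V := fun s => NormedSpace.exp (s • A') x with hcdef
    have hc0 : c 0 = x := by simp [hcdef, NormedSpace.exp_zero]
    have hcd : ∀ s : ℝ, HasDerivAt c (A' (c s)) s := fun s => hasDerivAt_exp_clm_apply A' x s
    have hccont : Continuous c := continuous_iff_continuousAt.2 fun s => (hcd s).continuousAt
    set f : ℝ → ℝ := fun s => (Metric.infDist (c s) K) ^ 2 with hfdef
    have hf0 : f 0 = 0 := by simp [hfdef, hc0, Metric.infDist_zero_of_mem hx]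
    have hfcont : Continuous f := ((Metric.continuous_infDist_pt K).comp hccont).pow 2
    set C := 2 * ‖A'‖ with hCdef
    have key : ∀ s ∈ Set.Icc (0:ℝ) t, f s ≤ gronwallBound 0 C 0 (s - 0) := by
      apply le_gronwallBound_of_liminf_deriv_right_le (f' := fun s => C * f s)
        hfcont.continuousOn ?_ (le_of_eq hf0) (fun s _ => by simp)
      intro s hs r hr
      obtain ⟨p, hp, hproj, hppz, hnorm⟩ := exists_cone_proj hK (c s)
      set q := c s - p with hqdef
      have hfs : f s = ‖q‖ ^ 2 := by simp only [hfdef]; rw [← hnorm]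
      set φ : ℝ → ℝ := fun z => ⟪c z - p, c z - p⟫ with hφdef
      have hφs : φ s = f s := by
        rw [hφdef, hfs]
        exact real_inner_self_eq_norm_sq q
      have hφd : HasDerivAt φ (2 * ⟪q, A' (c s)⟫) s := by
        have hgd : HasDerivAt (fun z => c z - p) (A' (c s)) s := (hcd s).sub_const p
        have h2 := hgd.inner ℝ hgd
        refine h2.congr_deriv ?_
        rw [hqdef, real_inner_comm (A' (c s)) (c s - p), two_mul]
      have hbound : 2 * ⟪q, A' (c s)⟫ ≤ C * f s := by
        have hcs : c s = q + p := by rw [hqdef]; abel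
        have hsplit : A' (c s) = A' q + A' p := by rw [hcs, map_add]
        have hdual : -q ∈ dualCone K := by
          intro k hk
          have := hproj k hk
          rw [inner_neg_left]
          linarith
        have hz : ⟪-q, p⟫ = 0 := by rw [inner_neg_left, hqdef, hppz, neg_zero]
        have hq1 : ⟪q, A' p⟫ ≤ 0 := by
          have := hqmi p hp (-q) hdual hz
          rw [inner_neg_left, ← hA'A p] at this
          linarith
        have hq2 : ⟪q, A' q⟫ ≤ ‖A'‖ * ‖q‖ ^ 2 := by
          have h1 := real_inner_le_norm q (A' q)
          have h2 := A'.le_opNorm q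
          nlinarith [norm_nonneg q, norm_nonneg (A' q)]
        rw [hsplit, inner_add_right, hfs, hCdef]
        nlinarith
      have hlt : 2 * ⟪q, A' (c s)⟫ < r := lt_of_le_of_lt hbound hr
      have hslope : Filter.Tendsto (slope φ s) (nhdsWithin s (Set.Ioi s))
          (nhds (2 * ⟪q, A' (c s)⟫)) := by
        have h1 : HasDerivWithinAt φ (2 * ⟪q, A' (c s)⟫) (Set.Ioi s) s := hφd.hasDerivWithinAt
        have h2 := hasDerivWithinAt_iff_tendsto_slope.1 h1
        rwa [Set.diff_singleton_eq_self (by simp)] at h2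
      have hev : ∀ᶠ z in nhdsWithin s (Set.Ioi s), (z - s)⁻¹ * (f z - f s) < r := by
        filter_upwards [hslope.eventually_lt_const hlt, self_mem_nhdsWithin] with z hz1 hz2
        have hzs : (0:ℝ) < z - s := sub_pos.2 hz2
        have hfφ : f z ≤ φ z := by
          rw [hfdef, hφdef]
          simp only
          rw [real_inner_self_eq_norm_sq]
          have h1 : Metric.infDist (c z) K ≤ ‖c z - p‖ := by
            rw [← dist_eq_norm]
            exact Metric.infDist_le_dist_of_mem hp
          exact pow_le_pow_left₀ Metric.infDist_nonneg h1 2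
        have hle : (z - s)⁻¹ * (f z - f s) ≤ slope φ s z := by
          rw [slope_def_field, div_eq_inv_mul]
          apply mul_le_mul_of_nonneg_left _ (inv_nonneg.2 hzs.le)
          linarith
        linarith
      exact hev.frequently
    have hft := key t ⟨ht, le_rfl⟩
    rw [gronwallBound_ε0_δ0] at hft
    have hge : 0 ≤ f t := sq_nonneg _
    have hfteq : f t = 0 := le_antisymm hft hge
    have hdist : Metric.infDist (c t) K = 0 := by
      have := (pow_eq_zero_iff (two_ne_zero)).1 hfteq
      exact this
    exact (hK.closed.mem_iff_infDist_zero hKne).2 hdist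
  · -- invariance → QMI
    intro h x hx v hv hvx
    set c : ℝ → V := fun s => NormedSpace.exp (s • A') x with hcdef
    have hc0 : c 0 = x := by simp [hcdef, NormedSpace.exp_zero]
    set g : ℝ → ℝ := fun s => ⟪v, c s⟫ with hgdef
    have hgd : HasDerivAt g (⟪v, A x⟫) 0 := by
      have hd := (hasDerivAt_const (0:ℝ) v).inner ℝ (hasDerivAt_exp_clm_apply A' x 0)
      simpa [hgdef, hc0, hA'A] using hd
    have hg0 : g 0 = 0 := by simp [hgdef, hc0, hvx]
    have hslope : Filter.Tendsto (slope g 0) (nhdsWithin 0 (Set.Ioi 0)) (nhds ⟪v, A x⟫) := by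
      have h1 : HasDerivWithinAt g (⟪v, A x⟫) (Set.Ioi 0) 0 := hgd.hasDerivWithinAt
      have := hasDerivWithinAt_iff_tendsto_slope.1 h1
      rwa [Set.diff_singleton_eq_self (by simp)] at this
    refine ge_of_tendsto hslope ?_
    filter_upwards [self_mem_nhdsWithin] with z hz
    have hz0 : (0:ℝ) < z := hz
    have hgz : 0 ≤ g z := hv _ (h z hz0.le x hx)
    rw [slope_def_field, hg0]
    apply div_nonneg (by linarith) (by linarith)

end
end

section
/- Let V be a finite-dimensional real inner product space, K ⊆ V a generating proper closed convex cone, and A : V → V a linear map. Then A is quasimonotone increasing with respect to K if and only if for every real λ > τ(A) the map λ·id − A is invertible and (λ·id − A)^{-1}(K) ⊆ K. -/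
open scoped RealInnerProductSpace

noncomputable section

variable {V : Type*} [NormedAddCommGroup V] [InnerProductSpace ℝ V]

variable [FiniteDimensional ℝ V]

set_option linter.unusedSectionVars false
set_option synthInstance.maxHeartbeats 1000000
set_option maxHeartbeats 1000000
namespace QmiAux

variable {K : Set V}

lemma nonempty (hK : IsGenProperClosedConvexCone K) : K.Nonempty := by
  obtain ⟨x, hx, -⟩ := hK.generating 0
  exact ⟨x, hx⟩

lemma zero_mem (hK : IsGenProperClosedConvexCone K) : (0 : V) ∈ K := by
  obtain ⟨x, hx⟩ := nonempty hK
  simpa using hK.smul_mem 0 le_rfl x hx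

lemma add_mem (hK : IsGenProperClosedConvexCone K) {x y : V} (hx : x ∈ K) (hy : y ∈ K) :
    x + y ∈ K := by
  have h := hK.convex hx hy (by norm_num : (0:ℝ) ≤ 1/2) (by norm_num : (0:ℝ) ≤ 1/2) (by norm_num)
  have := hK.smul_mem 2 (by norm_num) _ h
  convert this using 1
  module

lemma sum_mem (hK : IsGenProperClosedConvexCone K) {ι : Type*} (s : Finset ι) (f : ι → V)
    (hf : ∀ i ∈ s, f i ∈ K) : ∑ i ∈ s, f i ∈ K := by
  classical
  induction s using Finset.induction_on with
  | empty => simpa using zero_mem hK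
  | insert _ _ hni ih =>
    rename_i a s
    rw [Finset.sum_insert hni]
    exact add_mem hK (hf a (Finset.mem_insert_self a s))
      (ih fun i hi => hf i (Finset.mem_insert_of_mem hi))

lemma cSpectrum_eq (A : V →ₗ[ℝ] V) : cSpectrum A = (LinearMap.charpoly A).rootSet ℂ := by
  ext z
  rw [Polynomial.mem_rootSet]
  simp [cSpectrum, (LinearMap.charpoly_monic A).ne_zero]

lemma re_le_specBound (A : V →ₗ[ℝ] V) {z : ℂ} (hz : z ∈ cSpectrum A) : z.re ≤ specBound A := by
  apply le_csSup
  · apply Set.Finite.bddAbove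
    apply Set.Finite.image
    rw [cSpectrum_eq]
    exact Polynomial.rootSet_finite _ _
  · exact ⟨z, hz, rfl⟩

lemma injective_of_specBound_lt {A : V →ₗ[ℝ] V} {l : ℝ} (h : specBound A < l) :
    Function.Injective (l • (LinearMap.id : V →ₗ[ℝ] V) - A) := by
  rw [← LinearMap.ker_eq_bot]
  rw [LinearMap.ker_eq_bot']
  intro x hx
  by_contra hx0
  have hAx : A x = l • x := by
    have : l • x - A x = 0 := by simpa using hx
    linear_combination (norm := module) -this
  have hev : Module.End.HasEigenvalue A l :=
    Module.End.hasEigenvalue_of_hasEigenvector ⟨Module.End.mem_eigenspace_iff.mpr hAx, hx0⟩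
  have hroot : (minpoly ℝ A).IsRoot l := Module.End.hasEigenvalue_iff_isRoot.mp hev
  obtain ⟨q, hq⟩ := LinearMap.minpoly_dvd_charpoly A
  have hcroot : (LinearMap.charpoly A).eval l = 0 := by
    rw [hq, Polynomial.eval_mul, hroot, zero_mul]
  have hmem : ((l : ℂ)) ∈ cSpectrum A := by
    show Polynomial.aeval ((l : ℂ)) _ = 0
    have : ((l:ℂ)) = algebraMap ℝ ℂ l := rfl
    rw [this, Polynomial.aeval_algebraMap_apply]
    rw [Polynomial.aeval_def]
    rw [show algebraMap ℝ ℝ = RingHom.id ℝ from Algebra.algebraMap_self]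
    show (algebraMap ℝ ℂ) (Polynomial.eval l (LinearMap.charpoly A)) = 0
    rw [hcroot]; simp
  have := re_le_specBound A hmem
  simp at this
  linarith


def opB (A : V →ₗ[ℝ] V) (l : ℝ) : V →L[ℝ] V :=
  l • (1 : V →L[ℝ] V) - LinearMap.toContinuousLinearMap A

def res (A : V →ₗ[ℝ] V) (l : ℝ) : V →L[ℝ] V := Ring.inverse (opB A l)

variable (A : V →ₗ[ℝ] V)

lemma opB_apply (l : ℝ) (x : V) : opB A l x = l • x - A x := by
  simp [opB]

lemma opB_coe (l : ℝ) : ⇑(opB A l) = ⇑(l • (LinearMap.id : V →ₗ[ℝ] V) - A) := by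
  ext x; simp [opB]

lemma bijective_of_specBound_lt {l : ℝ} (h : specBound A < l) :
    Function.Bijective (l • (LinearMap.id : V →ₗ[ℝ] V) - A) :=
  ⟨injective_of_specBound_lt h,
    (LinearMap.injective_iff_surjective).mp (injective_of_specBound_lt h)⟩

lemma isUnit_opB {l : ℝ} (h : specBound A < l) : IsUnit (opB A l) := by
  have hbij : Function.Bijective (opB A l) := by
    rw [opB_coe]; exact bijective_of_specBound_lt A h
  let e := ContinuousLinearEquiv.ofBijective (opB A l)
      (LinearMap.ker_eq_bot.mpr hbij.1) (LinearMap.range_eq_top.mpr hbij.2)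
  refine ⟨⟨opB A l, (e.symm : V →L[ℝ] V), ?_, ?_⟩, rfl⟩
  · ext x
    show opB A l (e.symm x) = x
    calc opB A l (e.symm x) = e (e.symm x) := by
          rw [ContinuousLinearEquiv.coeFn_ofBijective]
    _ = x := e.apply_symm_apply x
  · ext x
    show e.symm (opB A l x) = x
    have : opB A l x = e x := by rw [ContinuousLinearEquiv.coeFn_ofBijective]
    rw [this]
    exact e.symm_apply_apply x

lemma opB_res_apply {l : ℝ} (h : specBound A < l) (y : V) : opB A l (res A l y) = y := by
  have h1 : opB A l * res A l = 1 := Ring.mul_inverse_cancel _ (isUnit_opB A h)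
  calc opB A l (res A l y) = (opB A l * res A l) y := rfl
  _ = y := by rw [h1]; rfl

lemma res_opB_apply {l : ℝ} (h : specBound A < l) (x : V) : res A l (opB A l x) = x := by
  have h1 : res A l * opB A l = 1 := Ring.inverse_mul_cancel _ (isUnit_opB A h)
  calc res A l (opB A l x) = (res A l * opB A l) x := rfl
  _ = x := by rw [h1]; rfl

lemma norm_res_apply_le {l : ℝ} (h : specBound A < l)
    (hl : ‖LinearMap.toContinuousLinearMap A‖ < l) (y : V) :
    ‖res A l y‖ ≤ ‖y‖ / (l - ‖LinearMap.toContinuousLinearMap A‖) := by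
  set Ac := LinearMap.toContinuousLinearMap A with hAc
  set x := res A l y with hx
  have hl0 : 0 < l := lt_of_le_of_lt (norm_nonneg Ac) hl
  have hy : l • x - Ac x = y := by
    have := opB_res_apply A h y
    rw [opB_apply] at this
    simpa [hAc] using this
  have h1 : l * ‖x‖ ≤ ‖y‖ + ‖Ac‖ * ‖x‖ := by
    have : ‖l • x‖ ≤ ‖y‖ + ‖Ac x‖ := by
      calc ‖l • x‖ = ‖y + Ac x‖ := by rw [← hy]; congr 1; abel
      _ ≤ ‖y‖ + ‖Ac x‖ := norm_add_le _ _
    have h2 : ‖Ac x‖ ≤ ‖Ac‖ * ‖x‖ := Ac.le_opNorm x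
    have h3 : ‖l • x‖ = l * ‖x‖ := by
      rw [norm_smul, Real.norm_eq_abs, abs_of_pos hl0]
    linarith
  rw [le_div_iff₀ (by linarith)]
  nlinarith

lemma exists_proj (hK : IsGenProperClosedConvexCone K) (x : V) :
    ∃ p ∈ K, (p - x) ∈ dualCone K ∧ ⟪p - x, p⟫ = 0 := by
  obtain ⟨p, hpK, hp⟩ := exists_norm_eq_iInf_of_complete_convex (nonempty hK)
      hK.closed.isComplete hK.convex x
  have hchar := (norm_eq_iInf_iff_real_inner_le_zero hK.convex hpK).mp hp
  have h0 : 0 ≤ ⟪x - p, p⟫ := by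
    have := hchar 0 (zero_mem hK)
    simp only [zero_sub] at this
    rw [inner_neg_right] at this
    linarith
  have h2 : ⟪x - p, p⟫ ≤ 0 := by
    have := hchar ((2:ℝ) • p) (hK.smul_mem 2 (by norm_num) p hpK)
    have h2p : (2:ℝ) • p - p = p := by module
    rwa [h2p] at this
  have hp0 : ⟪x - p, p⟫ = 0 := le_antisymm h2 h0
  refine ⟨p, hpK, ?_, ?_⟩
  · intro z hz
    have := hchar z hz
    rw [inner_sub_right, hp0] at this
    have hz' : ⟪x - p, z⟫ ≤ 0 := by linarith
    have heq : ⟪p - x, z⟫ = - ⟪x - p, z⟫ := by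
      rw [show p - x = -(x - p) from (neg_sub x p).symm, inner_neg_left]
    rw [heq]
    linarith
  · rw [show p - x = -(x - p) from (neg_sub x p).symm, inner_neg_left, hp0]
    ring

lemma res_mem_of_norm_lt (hK : IsGenProperClosedConvexCone K) (hqmi : IsQMI K A) {l : ℝ}
    (h : specBound A < l) (hl : ‖LinearMap.toContinuousLinearMap A‖ < l)
    {y : V} (hy : y ∈ K) : res A l y ∈ K := by
  set Ac := LinearMap.toContinuousLinearMap A with hAc
  set x := res A l y with hx
  obtain ⟨p, hpK, hv, hvp⟩ := exists_proj hK x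
  set v := p - x with hvdef
  have hxpv : x = p - v := by simp [hvdef]
  have hvx : ⟪v, x⟫ = -‖v‖^2 := by
    rw [hxpv, inner_sub_right, hvp, real_inner_self_eq_norm_sq]
    ring
  have hqA : 0 ≤ ⟪v, A p⟫ := hqmi p hpK v hv hvp
  have hAxval : ⟪v, A x⟫ = ⟪v, A p⟫ - ⟪v, A v⟫ := by
    rw [hxpv, map_sub, inner_sub_right]
  have hACv : ∀ w : V, A w = Ac w := fun w => by simp [hAc]
  have hbound : ⟪v, A v⟫ ≤ ‖Ac‖ * ‖v‖^2 := by
    calc ⟪v, A v⟫ ≤ ‖v‖ * ‖A v‖ := real_inner_le_norm v (A v)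
    _ = ‖v‖ * ‖Ac v‖ := by rw [hACv]
    _ ≤ ‖v‖ * (‖Ac‖ * ‖v‖) := by
        have := Ac.le_opNorm v
        nlinarith [norm_nonneg v]
    _ = ‖Ac‖ * ‖v‖^2 := by ring
  have hy' : 0 ≤ ⟪v, y⟫ := hv y hy
  have hyx : y = l • x - A x := by
    have := opB_res_apply A h y
    rw [opB_apply] at this
    rw [← hx] at this
    exact this.symm
  have hiv : ⟪v, y⟫ = l * ⟪v, x⟫ - ⟪v, A x⟫ := by
    rw [hyx, inner_sub_right, real_inner_smul_right]
  have hfin : 0 ≤ (‖Ac‖ - l) * ‖v‖^2 := by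
    rw [hiv, hvx, hAxval] at hy'
    nlinarith
  have hv0 : ‖v‖ = 0 := by
    by_contra hne
    have : 0 < ‖v‖^2 := by positivity
    nlinarith
  have : v = 0 := norm_eq_zero.mp hv0
  have : x = p := by rw [hxpv, this, sub_zero]
  rwa [this]


lemma res_continuousAt {t : ℝ} (h : specBound A < t) (y : V) :
    ContinuousAt (fun l : ℝ => res A l y) t := by
  have hB : Continuous (fun l : ℝ => opB A l) := by
    unfold opB
    exact (continuous_id.smul continuous_const).sub continuous_const
  obtain ⟨u, hu⟩ := isUnit_opB A h
  have hinv : ContinuousAt Ring.inverse (opB A t) := by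
    rw [← hu]; exact NormedRing.inverse_continuousAt u
  have h1 : ContinuousAt (fun l : ℝ => res A l) t := hinv.comp hB.continuousAt
  exact ((ContinuousLinearMap.apply ℝ V y).continuous.continuousAt).comp h1

lemma res_mem_of_specBound_lt (hK : IsGenProperClosedConvexCone K) (hqmi : IsQMI K A)
    {l : ℝ} (h : specBound A < l) {y : V} (hy : y ∈ K) : res A l y ∈ K := by
  set Ac := LinearMap.toContinuousLinearMap A with hAc
  set P : ℝ → Prop := fun l => specBound A < l ∧ ∀ y ∈ K, res A l y ∈ K with hP
  have hbig : ∀ u : ℝ, specBound A < u → ‖Ac‖ < u → P u := fun u h1 h2 =>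
    ⟨h1, fun y hy => res_mem_of_norm_lt A hK hqmi h1 h2 hy⟩
  by_contra hc
  set T : Set ℝ := {u : ℝ | specBound A < u ∧ ¬ ∀ y ∈ K, res A u y ∈ K} with hT
  have hTne : T.Nonempty := ⟨l, h, fun hall => hc (hall y hy)⟩
  have hTbdd : BddAbove T := by
    refine ⟨max (specBound A) ‖Ac‖, fun u hu => ?_⟩
    by_contra hgt
    push_neg at hgt
    exact hu.2 (hbig u hu.1 (lt_of_le_of_lt (le_max_right _ _) hgt)).2
  set t := sSup T with htdef
  obtain ⟨l₀, hl₀T⟩ := id hTne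
  have hτt : specBound A < t := lt_of_lt_of_le hl₀T.1 (le_csSup hTbdd hl₀T)
  have hup : ∀ u : ℝ, t < u → ∀ y ∈ K, res A u y ∈ K := by
    intro u hu
    by_contra hnot
    have huT : u ∈ T := ⟨lt_trans hτt hu, hnot⟩
    exact absurd (le_csSup hTbdd huT) (not_le.mpr hu)
  have hPt : ∀ y ∈ K, res A t y ∈ K := by
    intro y hy
    have htend : Filter.Tendsto (fun n : ℕ => res A (t + 1/(n+1)) y) Filter.atTop
        (nhds (res A t y)) := by
      have hseq : Filter.Tendsto (fun n : ℕ => t + 1/((n:ℝ)+1)) Filter.atTop (nhds t) := by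
        have := tendsto_one_div_add_atTop_nhds_zero_nat (𝕜 := ℝ)
        have := this.const_add t
        simpa using this
      exact (res_continuousAt A hτt y).tendsto.comp hseq
    refine hK.closed.mem_of_tendsto htend (Filter.Eventually.of_forall fun n => ?_)
    refine hup (t + 1/((n:ℝ)+1)) ?_ y hy
    have : (0:ℝ) < 1/((n:ℝ)+1) := by positivity
    linarith
  -- Neumann series step
  set R := res A t with hR
  set ε : ℝ := (‖R‖ + 1)⁻¹ with hε
  have hεpos : 0 < ε := by positivity
  obtain ⟨u, huT, hu⟩ := exists_lt_of_lt_csSup hTne (by linarith : t - ε < t)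
  have hut : u ≤ t := le_csSup hTbdd huT
  set c : V →L[ℝ] V := (t - u) • R with hcdef
  have htu : 0 ≤ t - u := by linarith
  have hnc : ‖c‖ < 1 := by
    have h1 : ‖c‖ = (t - u) * ‖R‖ :=
      (norm_smul (t-u) R).trans (by rw [Real.norm_eq_abs, abs_of_nonneg htu])
    have h2 : t - u < ε := by linarith
    have h3 : 0 ≤ ‖R‖ := norm_nonneg R
    rw [h1]
    calc (t - u) * ‖R‖ ≤ (t-u) * (‖R‖ + 1) := by nlinarith
    _ < ε * (‖R‖ + 1) := by
        apply mul_lt_mul_of_pos_right h2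
        positivity
    _ = 1 := by rw [hε]; field_simp
  have hfact : opB A u = opB A t * (1 - c) := by
    have h1 : opB A t * R = 1 := Ring.mul_inverse_cancel _ (isUnit_opB A hτt)
    calc opB A u = opB A t - (t - u) • (1 : V →L[ℝ] V) := by
          rw [opB, opB, sub_smul]; abel
    _ = opB A t - (t - u) • (opB A t * R) := by rw [h1]
    _ = opB A t - opB A t * ((t - u) • R) := by rw [mul_smul_comm]
    _ = opB A t * (1 - c) := by rw [mul_sub, mul_one, hcdef]
  have hwunit : IsUnit ((1 : V →L[ℝ] V) - c) := isUnit_one_sub_of_norm_lt_one hnc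
  obtain ⟨w, hw⟩ := hwunit
  obtain ⟨v, hv⟩ := isUnit_opB A hτt
  have hresu : res A u = Ring.inverse ((1 : V →L[ℝ] V) - c) * R := by
    have e1 : opB A u = ↑(v * w) := by rw [hfact, Units.val_mul, hv, hw]
    have e2 : res A u = ↑(v * w)⁻¹ := by
      show Ring.inverse (opB A u) = _
      rw [e1, Ring.inverse_unit]
    have e3 : (↑w⁻¹ : V →L[ℝ] V) = Ring.inverse ((1 : V →L[ℝ] V) - c) := by
      rw [← hw, Ring.inverse_unit]
    have e4 : (↑v⁻¹ : V →L[ℝ] V) = R := by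
      have h5 : (↑v⁻¹ : V →L[ℝ] V) = Ring.inverse (opB A t) := by rw [← hv, Ring.inverse_unit]
      rw [h5]; rfl
    rw [e2, mul_inv_rev, Units.val_mul, e3, e4]
  have hgeo : HasSum (fun n : ℕ => c ^ n) (Ring.inverse ((1 : V →L[ℝ] V) - c)) :=
    hasSum_geom_series_inverse c hnc
  have hPu : ∀ y ∈ K, res A u y ∈ K := by
    intro y hy
    set z := R y with hz
    have hzK : z ∈ K := hPt y hy
    have hRn : ∀ n : ℕ, (R ^ n) z ∈ K := by
      intro n
      induction n with
      | zero => simpa using hzK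
      | succ n ih =>
        rw [pow_succ']
        have : (R * R ^ n) z = R ((R ^ n) z) := rfl
        rw [this]
        exact hPt _ ih
    have happ : HasSum (fun n : ℕ => (c ^ n) z) (Ring.inverse ((1 : V →L[ℝ] V) - c) z) :=
      (ContinuousLinearMap.apply ℝ V z).hasSum hgeo
    have hterm : ∀ n : ℕ, (c ^ n) z ∈ K := by
      intro n
      have : c ^ n = (t - u) ^ n • R ^ n := smul_pow _ _ _
      rw [this]
      have : ((t - u) ^ n • R ^ n) z = (t - u) ^ n • ((R ^ n) z) := rfl
      rw [this]
      exact hK.smul_mem _ (pow_nonneg htu n) _ (hRn n)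
    have hmem : Ring.inverse ((1 : V →L[ℝ] V) - c) z ∈ K := by
      refine hK.closed.mem_of_tendsto happ.tendsto_sum_nat
        (Filter.Eventually.of_forall fun n => ?_)
      exact sum_mem hK _ _ fun i _ => hterm i
    have : res A u y = Ring.inverse ((1 : V →L[ℝ] V) - c) z := by
      rw [hresu]; rfl
    rwa [this]
  exact huT.2 hPu

end QmiAux

/-- `A` is quasimonotone increasing w.r.t. `K` iff for every `λ > τ(A)` the map
`λ·id − A` is invertible and its inverse maps `K` into `K`. -/
theorem qmi_iff_resolvent_maps_cone (K : Set V) (hK : IsGenProperClosedConvexCone K)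
    (A : V →ₗ[ℝ] V) :
    IsQMI K A ↔
      ∀ l : ℝ, specBound A < l →
        Function.Bijective (l • (LinearMap.id : V →ₗ[ℝ] V) - A) ∧
        ∀ x : V, (l • (LinearMap.id : V →ₗ[ℝ] V) - A) x ∈ K → x ∈ K := by
  constructor
  · intro hqmi l hl
    refine ⟨QmiAux.bijective_of_specBound_lt A hl, fun x hx => ?_⟩
    have hx' : QmiAux.opB A l x ∈ K := by
      rw [congrFun (QmiAux.opB_coe A l) x]; exact hx
    have hmem := QmiAux.res_mem_of_specBound_lt A hK hqmi hl hx'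
    rwa [QmiAux.res_opB_apply A hl x] at hmem
  · intro hres x hxK v hv hvx
    set Ac := LinearMap.toContinuousLinearMap A with hAc
    have hmaps : ∀ l : ℝ, specBound A < l → ∀ y ∈ K, QmiAux.res A l y ∈ K := by
      intro l hl y hy
      refine (hres l hl).2 _ ?_
      have h1 : (l • (LinearMap.id : V →ₗ[ℝ] V) - A) (QmiAux.res A l y)
          = QmiAux.opB A l (QmiAux.res A l y) := (congrFun (QmiAux.opB_coe A l) _).symm
      rw [h1, QmiAux.opB_res_apply A hl]
      exact hy
    have hid : ∀ l : ℝ, specBound A < l → ∀ w : V,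
        l • QmiAux.res A l w = w + QmiAux.res A l (A w) := by
      intro l hl w
      have h1 : QmiAux.res A l (QmiAux.opB A l w) = w := QmiAux.res_opB_apply A hl w
      rw [QmiAux.opB_apply] at h1
      have h2 : l • QmiAux.res A l w - QmiAux.res A l (A w) = w := by
        rw [← (QmiAux.res A l).map_smul, ← map_sub]
        exact h1
      exact eq_add_of_sub_eq h2
    have key : ∀ l : ℝ, specBound A < l → 0 < l →
        0 ≤ ⟪v, A x⟫ + ⟪v, QmiAux.res A l (A (A x))⟫ := by
      intro l hl hl0
      have hr1 : QmiAux.res A l x ∈ K := hmaps l hl x hxK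
      have hw1 : l • QmiAux.res A l x ∈ K := hK.smul_mem l hl0.le _ hr1
      have e1 : l • QmiAux.res A l x = x + QmiAux.res A l (A x) := hid l hl x
      have h4 : 0 ≤ ⟪v, QmiAux.res A l (A x)⟫ := by
        have h5 := hv _ hw1
        rw [e1, inner_add_right, hvx] at h5
        linarith
      have e2 : l • QmiAux.res A l (A x) = A x + QmiAux.res A l (A (A x)) := hid l hl (A x)
      have h5 : 0 ≤ ⟪v, l • QmiAux.res A l (A x)⟫ := by
        rw [real_inner_smul_right]
        exact mul_nonneg hl0.le h4
      rwa [e2, inner_add_right] at h5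
    have hbound : ∀ l : ℝ, specBound A < l → ‖Ac‖ < l →
        -(‖v‖ * (‖A (A x)‖ / (l - ‖Ac‖))) ≤ ⟪v, A x⟫ := by
      intro l hl hal
      have h0 : 0 < l := lt_of_le_of_lt (norm_nonneg Ac) hal
      have h6 := key l hl h0
      have h7 : ⟪v, QmiAux.res A l (A (A x))⟫ ≤ ‖v‖ * ‖QmiAux.res A l (A (A x))‖ :=
        real_inner_le_norm _ _
      have h8 : ‖QmiAux.res A l (A (A x))‖ ≤ ‖A (A x)‖ / (l - ‖Ac‖) :=
        QmiAux.norm_res_apply_le A hl hal (A (A x))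
      have h9 : ‖v‖ * ‖QmiAux.res A l (A (A x))‖ ≤ ‖v‖ * (‖A (A x)‖ / (l - ‖Ac‖)) :=
        mul_le_mul_of_nonneg_left h8 (norm_nonneg v)
      linarith
    have htend : Filter.Tendsto (fun l : ℝ => -(‖v‖ * (‖A (A x)‖ / (l - ‖Ac‖))))
        Filter.atTop (nhds 0) := by
      have h1 : Filter.Tendsto (fun l : ℝ => l - ‖Ac‖) Filter.atTop Filter.atTop :=
        Filter.tendsto_atTop_add_const_right _ _ Filter.tendsto_id
      have h2 : Filter.Tendsto (fun l : ℝ => (l - ‖Ac‖)⁻¹) Filter.atTop (nhds 0) :=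
        h1.inv_tendsto_atTop
      have h3 := h2.const_mul (-(‖v‖ * ‖A (A x)‖))
      rw [mul_zero] at h3
      convert h3 using 2 with l
      ring
    refine le_of_tendsto htend ?_
    filter_upwards [Filter.eventually_gt_atTop (max (specBound A) ‖Ac‖)] with l hl
    exact hbound l (lt_of_le_of_lt (le_max_left _ _) hl) (lt_of_le_of_lt (le_max_right _ _) hl)

end
end

section
/- Let V be a finite-dimensional real inner product space, K ⊆ V a generating proper closed convex cone, and A : V → V a linear map. Then A is quasimonotone increasing with respect to K if and only if for every real λ > τ(A) the map λ·id − A^⊤ is invertible and (λ·id − A^⊤)^{-1}(K*) ⊆ K*. -/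
open scoped RealInnerProductSpace

noncomputable section

variable {V : Type*} [NormedAddCommGroup V] [InnerProductSpace ℝ V]

variable [FiniteDimensional ℝ V]

namespace QMIAux

variable {K : Set V}

lemma zero_mem (hK : IsGenProperClosedConvexCone K) : (0 : V) ∈ K := by
  obtain ⟨x, hx, -⟩ := hK.generating 0
  simpa using hK.smul_mem 0 le_rfl x hx

lemma add_mem (hK : IsGenProperClosedConvexCone K) {x y : V} (hx : x ∈ K) (hy : y ∈ K) :
    x + y ∈ K := by
  have h := hK.convex hx hy (by norm_num : (0:ℝ) ≤ 1/2) (by norm_num : (0:ℝ) ≤ 1/2)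
    (by norm_num)
  have h2 := hK.smul_mem 2 (by norm_num) _ h
  have : (2:ℝ) • ((1/2 : ℝ) • x + (1/2 : ℝ) • y) = x + y := by
    rw [smul_add, smul_smul, smul_smul]; norm_num
  rwa [this] at h2

lemma sum_mem (hK : IsGenProperClosedConvexCone K) {n : ℕ} {f : ℕ → V}
    (hf : ∀ i, f i ∈ K) : ∑ i ∈ Finset.range n, f i ∈ K := by
  induction n with
  | zero => simpa using zero_mem hK
  | succ n ih => rw [Finset.sum_range_succ]; exact add_mem hK ih (hf n)

variable [FiniteDimensional ℝ V]

/-- Projection onto a closed convex cone: existence and properties. -/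
lemma exists_proj (hK : IsGenProperClosedConvexCone K) (y : V) :
    ∃ p ∈ K, ⟪p - y, p⟫ = 0 ∧ (p - y) ∈ dualCone K ∧ ‖p - y‖ ^ 2 = ⟪p - y, -y⟫ := by
  obtain ⟨p, hp, hmin⟩ := exists_norm_eq_iInf_of_complete_convex ⟨0, zero_mem hK⟩
    (hK.closed.isComplete) hK.convex y
  have hch : ∀ w ∈ K, ⟪y - p, w - p⟫ ≤ 0 :=
    (norm_eq_iInf_iff_real_inner_le_zero hK.convex hp).mp hmin
  have h2p : ⟪y - p, p⟫ ≤ 0 := by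
    have := hch ((2:ℝ) • p) (hK.smul_mem 2 (by norm_num) p hp)
    have h2 : (2:ℝ) • p - p = p := by rw [two_smul]; abel
    rwa [h2] at this
  have h0p : 0 ≤ ⟪y - p, p⟫ := by
    have := hch 0 (zero_mem hK)
    rw [zero_sub, inner_neg_right] at this
    linarith
  have hpp : ⟪p - y, p⟫ = 0 := by
    rw [← neg_sub y p, inner_neg_left]; linarith
  refine ⟨p, hp, hpp, ?_, ?_⟩
  · intro z hz
    have := hch z hz
    rw [inner_sub_right] at this
    have h3 : ⟪y - p, z⟫ ≤ 0 := by linarith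
    rw [← neg_sub y p, inner_neg_left]
    linarith
  · have : ⟪p - y, p - y⟫ = ⟪p - y, p⟫ + ⟪p - y, -y⟫ := by
      rw [← inner_add_right]; congr 1; abel
    rw [← real_inner_self_eq_norm_sq, this, hpp, zero_add]


lemma mem_of_resolvent_large {A : V →ₗ[ℝ] V} (hK : IsGenProperClosedConvexCone K)
    (hq : IsQMI K A) {l : ℝ} (hl : ‖LinearMap.toContinuousLinearMap A‖ < l)
    {x y : V} (hx : x ∈ K) (hxy : l • y - A y = x) : y ∈ K := by
  obtain ⟨p, hp, hpp, hdc, hnorm⟩ := exists_proj hK y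
  set v := p - y with hv
  have hvx : 0 ≤ ⟪v, x⟫ := hdc x hx
  have hvy : ⟪v, y⟫ = -‖v‖ ^ 2 := by
    have h1 : ⟪v, -y⟫ = -⟪v, y⟫ := inner_neg_right v y
    rw [hnorm, h1]; ring_nf
  have hAp : 0 ≤ ⟪v, A p⟫ := hq p hp v hdc hpp
  have hAv : ⟪v, A v⟫ ≤ ‖LinearMap.toContinuousLinearMap A‖ * ‖v‖ ^ 2 := by
    have h1 : ⟪v, A v⟫ ≤ ‖v‖ * ‖A v‖ := real_inner_le_norm v (A v)
    have h2 : ‖A v‖ ≤ ‖LinearMap.toContinuousLinearMap A‖ * ‖v‖ := by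
      have := (LinearMap.toContinuousLinearMap A).le_opNorm v
      rwa [LinearMap.coe_toContinuousLinearMap'] at this
    nlinarith [norm_nonneg v, norm_nonneg (A v)]
  have hAy : ⟪v, A y⟫ = ⟪v, A p⟫ - ⟪v, A v⟫ := by
    have : A y = A p - A v := by rw [hv, map_sub]; abel
    rw [this, inner_sub_right]
  have hexp : ⟪v, x⟫ = l * ⟪v, y⟫ - ⟪v, A y⟫ := by
    rw [← hxy, inner_sub_right, real_inner_smul_right]
  have hvzero : ‖v‖ ^ 2 ≤ 0 := by
    by_contra hpos0
    push_neg at hpos0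
    have hmul := mul_lt_mul_of_pos_right hl hpos0
    rw [hvy, hAy] at hexp
    have hr : l * -‖v‖ ^ 2 = -(l * ‖v‖ ^ 2) := by ring
    rw [hr] at hexp
    linarith
  have hn2 : ‖v‖ ^ 2 = 0 := le_antisymm hvzero (sq_nonneg _)
  have : v = 0 := norm_eq_zero.mp ((pow_eq_zero_iff two_ne_zero).mp hn2)
  have : p = y := by rwa [hv, sub_eq_zero] at this
  rwa [← this]

lemma cSpectrum_finite (A : V →ₗ[ℝ] V) : (cSpectrum A).Finite := by
  have hne : (LinearMap.charpoly A).map (algebraMap ℝ ℂ) ≠ 0 :=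
    ((LinearMap.charpoly_monic A).map _).ne_zero
  apply (Polynomial.finite_setOf_isRoot hne).subset
  intro z hz
  simp only [Set.mem_setOf_eq, Polynomial.IsRoot, Polynomial.eval_map, ← Polynomial.aeval_def]
  exact hz

lemma le_specBound_of_isRoot (A : V →ₗ[ℝ] V) {l : ℝ}
    (h : (LinearMap.charpoly A).IsRoot l) : l ≤ specBound A := by
  have hmem : (l : ℂ) ∈ cSpectrum A := by
    show Polynomial.aeval (l : ℂ) (LinearMap.charpoly A) = 0
    have : ((l : ℝ) : ℂ) = algebraMap ℝ ℂ l := rfl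
    rw [this, Polynomial.aeval_algebraMap_apply_eq_algebraMap_eval, h.eq_zero, map_zero]
  have hbdd : BddAbove (Complex.re '' cSpectrum A) :=
    ((cSpectrum_finite A).image _).bddAbove
  exact le_csSup hbdd ⟨(l : ℂ), hmem, by simp⟩

lemma injective_of_gt_specBound (A : V →ₗ[ℝ] V) {l : ℝ} (hl : specBound A < l) :
    Function.Injective (l • (LinearMap.id : V →ₗ[ℝ] V) - A) := by
  rw [← LinearMap.ker_eq_bot, LinearMap.ker_eq_bot']
  intro v hv
  by_contra hv0
  have hAv : A v = l • v := by
    have : l • v - A v = 0 := by simpa using hv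
    linear_combination (norm := module) -this
  have hev : Module.End.HasEigenvalue A l :=
    Module.End.hasEigenvalue_of_hasEigenvector
      ⟨Module.End.mem_eigenspace_iff.mpr hAv, hv0⟩
  have hroot : (minpoly ℝ A).IsRoot l := Module.End.hasEigenvalue_iff_isRoot.mp hev
  have hroot2 : (LinearMap.charpoly A).IsRoot l :=
    hroot.dvd (LinearMap.minpoly_dvd_charpoly A)
  exact absurd (le_specBound_of_isRoot A hroot2) (not_le.mpr hl)

lemma bijective_of_gt_specBound (A : V →ₗ[ℝ] V) {l : ℝ} (hl : specBound A < l) :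
    Function.Bijective (l • (LinearMap.id : V →ₗ[ℝ] V) - A) :=
  ⟨injective_of_gt_specBound A hl,
    (LinearMap.injective_iff_surjective).mp (injective_of_gt_specBound A hl)⟩


lemma exists_unit_of_bijective {B : V →ₗ[ℝ] V} (hB : Function.Bijective B) :
    ∃ u : (V →L[ℝ] V)ˣ, (u : V →L[ℝ] V) = LinearMap.toContinuousLinearMap B := by
  let e := LinearEquiv.ofBijective B hB
  let ce := e.toContinuousLinearEquiv
  refine ⟨⟨LinearMap.toContinuousLinearMap B, (ce.symm : V →L[ℝ] V), ?_, ?_⟩, rfl⟩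
  · ext x
    show LinearMap.toContinuousLinearMap B (ce.symm x) = x
    rw [LinearMap.coe_toContinuousLinearMap']
    have h := e.apply_symm_apply x
    simpa [ce, e, LinearEquiv.ofBijective_apply] using h
  · ext x
    show ce.symm (LinearMap.toContinuousLinearMap B x) = x
    rw [LinearMap.coe_toContinuousLinearMap']
    have h := e.symm_apply_apply x
    simpa [ce, e, LinearEquiv.ofBijective_apply] using h

/-- step down: from a good unit at `l₀` to one at `b ≤ l₀`. -/
lemma good_step (hK : IsGenProperClosedConvexCone K) {A : V →ₗ[ℝ] V} {l₀ b : ℝ}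
    (hb : b ≤ l₀) (u : (V →L[ℝ] V)ˣ)
    (hu : (u : V →L[ℝ] V) = l₀ • (1 : V →L[ℝ] V) - LinearMap.toContinuousLinearMap A)
    (huK : ∀ x ∈ K, (↑u⁻¹ : V →L[ℝ] V) x ∈ K)
    (hsmall : (l₀ - b) * ‖(↑u⁻¹ : V →L[ℝ] V)‖ < 1) :
    ∃ w : (V →L[ℝ] V)ˣ,
      (w : V →L[ℝ] V) = b • (1 : V →L[ℝ] V) - LinearMap.toContinuousLinearMap A ∧
      ∀ x ∈ K, (↑w⁻¹ : V →L[ℝ] V) x ∈ K := by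
  set R : V →L[ℝ] V := (↑u⁻¹ : V →L[ℝ] V) with hR
  set c : ℝ := l₀ - b with hc
  have hc0 : 0 ≤ c := by simp [hc]; linarith
  set t : V →L[ℝ] V := c • R with ht
  have htn : ‖t‖ < 1 := by
    rw [ht]
    calc ‖c • R‖ = |c| * ‖R‖ := (norm_smul c R).trans (by rw [Real.norm_eq_abs])
      _ = c * ‖R‖ := by rw [abs_of_nonneg hc0]
      _ < 1 := hsmall
  have hsummable : Summable (fun n : ℕ => t ^ n) := summable_geometric_of_norm_lt_one htn
  let w0 : (V →L[ℝ] V)ˣ := Units.oneSub t htn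
  refine ⟨u * w0, ?_, ?_⟩
  · have : ((u * w0 : (V →L[ℝ] V)ˣ) : V →L[ℝ] V) = ↑u * (1 - t) := rfl
    rw [this, mul_sub, mul_one, ht, mul_smul_comm, u.mul_inv, hu, hc, sub_smul]
    abel
  · intro x hx
    have hinv : ((↑(u * w0)⁻¹ : V →L[ℝ] V)) = (∑' n : ℕ, t ^ n) * R := by
      rw [mul_inv_rev]
      rfl
    rw [hinv]
    have hy : R x ∈ K := huK x hx
    set y := R x with hyy
    have happ : ((∑' n : ℕ, t ^ n) * R) x = ∑' n : ℕ, (t ^ n) y := by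
      have := (hsummable.hasSum.mapL (ContinuousLinearMap.apply ℝ V y)).tsum_eq
      simp only [ContinuousLinearMap.apply_apply] at this
      rw [ContinuousLinearMap.mul_apply, ← hyy, ← this]
    rw [happ]
    have hterm : ∀ n : ℕ, (t ^ n) y ∈ K := by
      intro n
      induction n with
      | zero => simpa using hy
      | succ n ih =>
        have : (t ^ (n + 1)) y = t ((t ^ n) y) := by
          rw [pow_succ']
          rfl
        rw [this, ht]
        exact hK.smul_mem c hc0 _ (huK _ ih)
    have hsum2 : HasSum (fun n : ℕ => (t ^ n) y) (∑' n : ℕ, (t ^ n) y) := by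
      have := hsummable.hasSum.mapL (ContinuousLinearMap.apply ℝ V y)
      simp only [ContinuousLinearMap.apply_apply] at this
      exact this.tsum_eq ▸ this
    have htend := hsum2.tendsto_sum_nat
    refine hK.closed.mem_of_tendsto htend (Filter.Eventually.of_forall fun n => ?_)
    exact Finset.sum_induction _ _ (fun a b ha hb => add_mem hK ha hb) (zero_mem hK)
      fun i _ => hterm i

/-- nearby unit with norm bound. -/
lemma unit_nearby {A : V →ₗ[ℝ] V} {m l : ℝ} (u : (V →L[ℝ] V)ˣ)
    (hu : (u : V →L[ℝ] V) = m • (1 : V →L[ℝ] V) - LinearMap.toContinuousLinearMap A)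
    (hsmall : |m - l| * ‖(↑u⁻¹ : V →L[ℝ] V)‖ ≤ 1/2) :
    ∃ w : (V →L[ℝ] V)ˣ,
      (w : V →L[ℝ] V) = l • (1 : V →L[ℝ] V) - LinearMap.toContinuousLinearMap A ∧
      ‖(↑w⁻¹ : V →L[ℝ] V)‖ ≤ 2 * ‖(↑u⁻¹ : V →L[ℝ] V)‖ := by
  set R : V →L[ℝ] V := (↑u⁻¹ : V →L[ℝ] V) with hR
  set t : V →L[ℝ] V := (m - l) • R with ht
  have htn2 : ‖t‖ ≤ 1/2 := by
    rw [ht]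
    calc ‖(m - l) • R‖ = |m - l| * ‖R‖ := (norm_smul (m - l) R).trans (by rw [Real.norm_eq_abs])
      _ ≤ 1/2 := hsmall
  have htn : ‖t‖ < 1 := lt_of_le_of_lt htn2 (by norm_num)
  let w0 : (V →L[ℝ] V)ˣ := Units.oneSub t htn
  refine ⟨u * w0, ?_, ?_⟩
  · have : ((u * w0 : (V →L[ℝ] V)ˣ) : V →L[ℝ] V) = ↑u * (1 - t) := rfl
    rw [this, mul_sub, mul_one, ht, mul_smul_comm, u.mul_inv, hu, sub_smul]
    abel
  · have hinv : ((↑(u * w0)⁻¹ : V →L[ℝ] V)) = (∑' n : ℕ, t ^ n) * R := by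
      rw [mul_inv_rev]; rfl
    rw [hinv]
    have h1 : ‖(∑' n : ℕ, t ^ n) * R‖ ≤ ‖∑' n : ℕ, t ^ n‖ * ‖R‖ := norm_mul_le _ _
    have h2 : ‖∑' n : ℕ, t ^ n‖ ≤ ‖(1 : V →L[ℝ] V)‖ - 1 + (1 - ‖t‖)⁻¹ :=
      tsum_geometric_le_of_norm_lt_one t htn
    have h3 : ‖(1 : V →L[ℝ] V)‖ ≤ 1 := ContinuousLinearMap.norm_id_le
    have h4 : (1 - ‖t‖)⁻¹ ≤ 2 := by
      rw [inv_le_comm₀ (by linarith) (by norm_num)]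
      linarith
    have h5 : ‖∑' n : ℕ, t ^ n‖ ≤ 2 := by linarith
    calc ‖(∑' n : ℕ, t ^ n) * R‖ ≤ ‖∑' n : ℕ, t ^ n‖ * ‖R‖ := h1
      _ ≤ 2 * ‖R‖ := by
          apply mul_le_mul_of_nonneg_right h5 (norm_nonneg R)


lemma toCLM_shift (A : V →ₗ[ℝ] V) (l : ℝ) :
    LinearMap.toContinuousLinearMap (l • (LinearMap.id : V →ₗ[ℝ] V) - A)
      = l • (1 : V →L[ℝ] V) - LinearMap.toContinuousLinearMap A := by
  ext z
  simp [LinearMap.coe_toContinuousLinearMap']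

/-- `l` is "good": `l•1 - A` is invertible (as a continuous linear map) and the inverse
preserves `K`. -/
def GoodL (K : Set V) (A : V →ₗ[ℝ] V) (l : ℝ) : Prop :=
  ∃ u : (V →L[ℝ] V)ˣ,
    (u : V →L[ℝ] V) = l • (1 : V →L[ℝ] V) - LinearMap.toContinuousLinearMap A ∧
    ∀ x ∈ K, (↑u⁻¹ : V →L[ℝ] V) x ∈ K

lemma apply_unit_inv {A : V →ₗ[ℝ] V} {l : ℝ} (u : (V →L[ℝ] V)ˣ)
    (hu : (u : V →L[ℝ] V) = l • (1 : V →L[ℝ] V) - LinearMap.toContinuousLinearMap A)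
    (x : V) :
    l • ((↑u⁻¹ : V →L[ℝ] V) x) - A ((↑u⁻¹ : V →L[ℝ] V) x) = x := by
  have h : ((↑u * ↑u⁻¹ : V →L[ℝ] V)) x = x := by rw [u.mul_inv]; rfl
  rw [ContinuousLinearMap.mul_apply, hu] at h
  simpa [LinearMap.coe_toContinuousLinearMap'] using h

lemma goodL_of_large (hK : IsGenProperClosedConvexCone K) {A : V →ₗ[ℝ] V}
    (hq : IsQMI K A) {l : ℝ} (hl1 : specBound A < l)
    (hl2 : ‖LinearMap.toContinuousLinearMap A‖ < l) : GoodL K A l := by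
  obtain ⟨u, hu⟩ := exists_unit_of_bijective (bijective_of_gt_specBound A hl1)
  rw [toCLM_shift] at hu
  exact ⟨u, hu, fun x hx => mem_of_resolvent_large hK hq hl2 hx (apply_unit_inv u hu x)⟩

lemma goodL_all (hK : IsGenProperClosedConvexCone K) {A : V →ₗ[ℝ] V}
    (hq : IsQMI K A) : ∀ l : ℝ, specBound A < l → GoodL K A l := by
  by_contra hcon
  push_neg at hcon
  obtain ⟨l₁, hl₁, hbad₁⟩ := hcon
  set Bad := {l : ℝ | specBound A < l ∧ ¬ GoodL K A l} with hBad
  have hBne : Bad.Nonempty := ⟨l₁, hl₁, hbad₁⟩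
  have hBbdd : BddAbove Bad := by
    refine ⟨max (specBound A) ‖LinearMap.toContinuousLinearMap A‖, fun l hl => ?_⟩
    by_contra hgt
    push_neg at hgt
    exact hl.2 (goodL_of_large hK hq hl.1 (lt_of_le_of_lt (le_max_right _ _) hgt))
  set m := sSup Bad with hm
  have hmem_le : ∀ b ∈ Bad, b ≤ m := fun b hb => le_csSup hBbdd hb
  have hm1 : specBound A < m := lt_of_lt_of_le hl₁ (hmem_le l₁ ⟨hl₁, hbad₁⟩)
  obtain ⟨um, hum⟩ := exists_unit_of_bijective (bijective_of_gt_specBound A hm1)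
  rw [toCLM_shift] at hum
  set C := ‖(↑um⁻¹ : V →L[ℝ] V)‖ with hC
  have hC0 : 0 ≤ C := norm_nonneg _
  set h : ℝ := 1 / (8 * (C + 1)) with hh
  have hhpos : 0 < h := by rw [hh]; positivity
  have hl₀spec : specBound A < m + h := by linarith
  have hl₀good : GoodL K A (m + h) := by
    by_contra hbadl
    have := hmem_le (m + h) ⟨hl₀spec, hbadl⟩
    linarith
  obtain ⟨u₀, hu₀, hu₀K⟩ := hl₀good
  -- norm bound on u₀⁻¹ via the nearby-unit lemma
  have hsmall1 : |m - (m + h)| * ‖(↑um⁻¹ : V →L[ℝ] V)‖ ≤ 1 / 2 := by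
    have : |m - (m + h)| = h := by rw [abs_sub_comm]; simp [abs_of_nonneg hhpos.le]
    rw [this, ← hC, hh]
    rw [div_mul_eq_mul_div, one_mul, div_le_iff₀ (by positivity)]
    nlinarith
  obtain ⟨w, hw, hwn⟩ := unit_nearby um hum hsmall1
  have hwu : w = u₀ := Units.ext (hw.trans hu₀.symm)
  rw [hwu, ← hC] at hwn
  -- a bad point close below m
  obtain ⟨b, hbBad, hbgt⟩ := exists_lt_of_lt_csSup hBne (show m - h < m by linarith)
  have hble : b ≤ m := hmem_le b hbBad
  -- step down from m + h to b
  have hsmall2 : (m + h - b) * ‖(↑u₀⁻¹ : V →L[ℝ] V)‖ < 1 := by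
    have h1 : m + h - b < 2 * h := by linarith
    have h2 : (0:ℝ) ≤ m + h - b := by linarith
    calc (m + h - b) * ‖(↑u₀⁻¹ : V →L[ℝ] V)‖
        ≤ (m + h - b) * (2 * C) := mul_le_mul_of_nonneg_left hwn h2
      _ ≤ 2 * h * (2 * C) := by nlinarith
      _ < 1 := by
          rw [hh]
          have he : 2 * (1 / (8 * (C + 1))) * (2 * C) = C / (2 * (C + 1)) := by
            field_simp
            ring
          rw [he, div_lt_one (by positivity)]
          linarith
  obtain ⟨wb, hwb, hwbK⟩ := good_step hK (show b ≤ m + h by linarith) u₀ hu₀ hu₀K hsmall2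
  exact hbBad.2 ⟨wb, hwb, hwbK⟩

lemma adjoint_shift (A : V →ₗ[ℝ] V) (l : ℝ) :
    LinearMap.adjoint (l • (LinearMap.id : V →ₗ[ℝ] V) - A)
      = l • (LinearMap.id : V →ₗ[ℝ] V) - LinearMap.adjoint A := by
  symm
  rw [LinearMap.eq_adjoint_iff]
  intro x y
  simp only [LinearMap.sub_apply, LinearMap.smul_apply, LinearMap.id_apply,
    inner_sub_left, inner_sub_right, real_inner_smul_left, real_inner_smul_right]
  rw [LinearMap.adjoint_inner_left]

lemma adjoint_bijective {B : V →ₗ[ℝ] V} (hB : Function.Bijective B) :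
    Function.Bijective (LinearMap.adjoint B) := by
  let e := LinearEquiv.ofBijective B hB
  have h1 : B ∘ₗ (e.symm : V →ₗ[ℝ] V) = LinearMap.id := by
    ext x
    show B (e.symm x) = x
    have := e.apply_symm_apply x
    simpa [e, LinearEquiv.ofBijective_apply] using this
  have h2 : (e.symm : V →ₗ[ℝ] V) ∘ₗ B = LinearMap.id := by
    ext x
    show e.symm (B x) = x
    have := e.symm_apply_apply x
    simpa [e, LinearEquiv.ofBijective_apply] using this
  have hid : LinearMap.adjoint (LinearMap.id : V →ₗ[ℝ] V) = LinearMap.id := by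
    symm
    rw [LinearMap.eq_adjoint_iff]
    intro x y
    simp
  have hL : LinearMap.adjoint (e.symm : V →ₗ[ℝ] V) ∘ₗ LinearMap.adjoint B
      = LinearMap.id := by
    rw [← LinearMap.adjoint_comp, h1, hid]
  have hR : LinearMap.adjoint B ∘ₗ LinearMap.adjoint (e.symm : V →ₗ[ℝ] V)
      = LinearMap.id := by
    rw [← LinearMap.adjoint_comp, h2, hid]
  have hLz : ∀ z, LinearMap.adjoint (e.symm : V →ₗ[ℝ] V) (LinearMap.adjoint B z) = z :=
    fun z => by simpa using LinearMap.congr_fun hL z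
  have hRz : ∀ z, LinearMap.adjoint B (LinearMap.adjoint (e.symm : V →ₗ[ℝ] V) z) = z :=
    fun z => by simpa using LinearMap.congr_fun hR z
  constructor
  · intro a b hab
    have h3 := congrArg (⇑(LinearMap.adjoint (e.symm : V →ₗ[ℝ] V))) hab
    rwa [hLz a, hLz b] at h3
  · intro y
    exact ⟨LinearMap.adjoint (e.symm : V →ₗ[ℝ] V) y, hRz y⟩

end QMIAux

/-- `A` is quasimonotone increasing w.r.t. `K` iff for every `λ > τ(A)` the map
`λ·id − A^⊤` is invertible and its inverse maps the dual cone `K*` into `K*`. -/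
theorem qmi_iff_adjoint_resolvent_maps_dual_cone (K : Set V)
    (hK : IsGenProperClosedConvexCone K) (A : V →ₗ[ℝ] V) :
    IsQMI K A ↔
      ∀ l : ℝ, specBound A < l →
        Function.Bijective (l • (LinearMap.id : V →ₗ[ℝ] V) - LinearMap.adjoint A) ∧
        ∀ v : V, (l • (LinearMap.id : V →ₗ[ℝ] V) - LinearMap.adjoint A) v ∈ dualCone K →
          v ∈ dualCone K := by
  constructor
  · -- forward direction
    intro hq l hl
    constructor
    · rw [← QMIAux.adjoint_shift]
      exact QMIAux.adjoint_bijective (QMIAux.bijective_of_gt_specBound A hl)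
    · intro v hv x hx
      obtain ⟨u, hu, huK⟩ := QMIAux.goodL_all hK hq l hl
      set y := (↑u⁻¹ : V →L[ℝ] V) x with hy
      have hyK : y ∈ K := huK x hx
      have heq : l • y - A y = x := QMIAux.apply_unit_inv u hu x
      have hvx : ⟪v, x⟫ =
          ⟪(l • (LinearMap.id : V →ₗ[ℝ] V) - LinearMap.adjoint A) v, y⟫ := by
        rw [← heq]
        simp only [LinearMap.sub_apply, LinearMap.smul_apply, LinearMap.id_apply,
          inner_sub_left, inner_sub_right, real_inner_smul_left, real_inner_smul_right]
        rw [LinearMap.adjoint_inner_left]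
      rw [hvx]
      exact hv y hyK
  · -- converse direction
    intro hres x hx v hv hvx
    have key : ∀ ε : ℝ, 0 < ε → -ε ≤ ⟪v, A x⟫ := by
      intro ε hε
      set N := ‖LinearMap.toContinuousLinearMap (LinearMap.adjoint A)‖ with hN
      have hN0 : 0 ≤ N := norm_nonneg _
      have hNle : ∀ z : V, ‖LinearMap.adjoint A z‖ ≤ N * ‖z‖ := by
        intro z
        have := (LinearMap.toContinuousLinearMap (LinearMap.adjoint A)).le_opNorm z
        rwa [LinearMap.coe_toContinuousLinearMap'] at this
      set D := N * ‖v‖ * ‖A x‖ with hD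
      have hD0 : 0 ≤ D := by rw [hD]; positivity
      set l := max (specBound A + 1) (N + 1 + D / ε) with hl
      have hlspec : specBound A < l :=
        lt_of_lt_of_le (by linarith) (le_max_left _ _)
      have hlN : N + 1 + D / ε ≤ l := le_max_right _ _
      have hDε : 0 ≤ D / ε := by positivity
      have hlpos : 0 < l := by linarith
      obtain ⟨hbij, hpres⟩ := hres l hlspec
      obtain ⟨w, hw⟩ := hbij.2 v
      have hwdc : w ∈ dualCone K := hpres w (by rw [hw]; exact hv)
      have hwx : 0 ≤ ⟪w, x⟫ := hwdc x hx
      have hwv : l • w - LinearMap.adjoint A w = v := by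
        simpa [LinearMap.sub_apply, LinearMap.smul_apply] using hw
      have hwAx : ⟪w, A x⟫ = l * ⟪w, x⟫ := by
        have h0 : ⟪l • w - LinearMap.adjoint A w, x⟫ = 0 := by rw [hwv]; exact hvx
        rw [inner_sub_left, real_inner_smul_left, LinearMap.adjoint_inner_left] at h0
        linarith
      have hwAx0 : 0 ≤ ⟪w, A x⟫ := by rw [hwAx]; exact mul_nonneg hlpos.le hwx
      have hnormw : (l - N) * ‖w‖ ≤ ‖v‖ := by
        have h1 : ‖l • w‖ - ‖LinearMap.adjoint A w‖ ≤ ‖l • w - LinearMap.adjoint A w‖ :=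
          norm_sub_norm_le _ _
        rw [hwv] at h1
        have h2 : ‖l • w‖ = l * ‖w‖ :=
          (norm_smul l w).trans (by rw [Real.norm_eq_abs, abs_of_pos hlpos])
        nlinarith [hNle w, norm_nonneg w]
      have h5 : ⟪v, A x⟫ = l * ⟪w, A x⟫ - ⟪LinearMap.adjoint A w, A x⟫ := by
        rw [← hwv, inner_sub_left, real_inner_smul_left]
      have h6 : ⟪LinearMap.adjoint A w, A x⟫ ≤ ‖LinearMap.adjoint A w‖ * ‖A x‖ :=
        real_inner_le_norm _ _
      have h7 : ‖LinearMap.adjoint A w‖ * ‖A x‖ ≤ N * ‖w‖ * ‖A x‖ :=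
        mul_le_mul_of_nonneg_right (hNle w) (norm_nonneg _)
      have h8 : N * ‖w‖ * ‖A x‖ ≤ ε := by
        have h9 : N * ‖w‖ * ‖A x‖ * (l - N) ≤ D := by
          have := mul_le_mul_of_nonneg_left hnormw (by positivity : 0 ≤ N * ‖A x‖)
          rw [hD]
          nlinarith [norm_nonneg w, norm_nonneg (A x), norm_nonneg v]
        have h10 : D ≤ ε * (l - N) := by
          have h11 : ε * (1 + D / ε) ≤ ε * (l - N) :=
            mul_le_mul_of_nonneg_left (by linarith) hε.le
          have h12 : ε * (1 + D / ε) = ε + D := by field_simp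
          linarith
        have h13 : 0 < l - N := by linarith
        have := h9.trans h10
        exact le_of_mul_le_mul_right this h13
      have hlmul : 0 ≤ l * ⟪w, A x⟫ := mul_nonneg hlpos.le hwAx0
      linarith
    by_contra hneg
    push_neg at hneg
    have := key (-⟪v, A x⟫ / 2) (by linarith)
    linarith

end
end
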